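/- arXiv:1211.3360 — 8 statements merged into one kernel-verified Lean document; each statement's English description precedes it below -/
import Mathlib

section
/- Let {f_i}_{i∈I} be a frame for a Hilbert space H with frame operator S, and let P be an orthogonal projection on H. Then {P f_i}_{i∈I} is a tight frame for the subspace PH with frame bound α > 0 if and only if P S P = α P. -/
open scoped ComplexInnerProductSpace

/-- For a frame with frame operator `S` and a projection `P`, the projected sequence is
a tight frame for the range of `P` with bound `α > 0` iff `P S P = α P`. -/
theorem projected_tight_frame_iff_PSP_eq_alphaP
    {H : Type*} [NormedAddCommGroup H] [InnerProductSpace ℂ H] [CompleteSpace H]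
    {I : Type*} (v : I → H) (A B : ℝ) (hA : 0 < A) (hAB : A ≤ B)
    (hframe : ∀ f : H,
      A * ‖f‖ ^ 2 ≤ ∑' i, ‖(inner ℂ (v i) f : ℂ)‖ ^ 2 ∧
      ∑' i, ‖(inner ℂ (v i) f : ℂ)‖ ^ 2 ≤ B * ‖f‖ ^ 2)
    (S : H →L[ℂ] H) (hS : ∀ f : H, HasSum (fun i => (inner ℂ (v i) f : ℂ) • v i) (S f))
    (P : H →L[ℂ] H) (hP : IsIdempotentElem P) (hPsa : IsSelfAdjoint P)
    (α : ℝ) (hα : 0 < α) :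
    (∀ f ∈ LinearMap.range (P : H →ₗ[ℂ] H), ∑' i, ‖(inner ℂ (P (v i)) f : ℂ)‖ ^ 2 = α * ‖f‖ ^ 2) ↔
      P ∘L S ∘L P = (α : ℂ) • P := by
  have hsym : (P : H →ₗ[ℂ] H).IsSymmetric :=
    ContinuousLinearMap.isSelfAdjoint_iff_isSymmetric.mp hPsa
  -- key identity : ⟪h, S h⟫ = ↑(∑' i, ‖⟪v i, h⟫‖²)
  have key : ∀ h : H,
      (inner ℂ h (S h) : ℂ) = ((∑' i, ‖(inner ℂ (v i) h : ℂ)‖ ^ 2 : ℝ) : ℂ) := by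
    intro h
    have h1 := (hS h).mapL (innerSL ℂ h)
    have h2 : HasSum (fun i => ((‖(inner ℂ (v i) h : ℂ)‖ ^ 2 : ℝ) : ℂ)) (inner ℂ h (S h)) := by
      convert h1 using 2 with i
      · rfl
      rw [innerSL_apply_apply, inner_smul_right, ← inner_conj_symm (v i) h, RCLike.conj_mul]
      norm_cast
      simp [norm_inner_symm]
      rfl
    have h3 := h2.mapL Complex.reCLM
    simp only [Complex.reCLM_apply, Complex.ofReal_re] at h3
    have h4 := h3.mapL Complex.ofRealCLM
    simp only [Complex.ofRealCLM_apply] at h4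
    rw [h3.tsum_eq]
    exact h2.unique h4
  -- rewrite the projected sums
  have hproj : ∀ i (f : H), (inner ℂ (P (v i)) f : ℂ) = inner ℂ (v i) (P f) := fun i f => hsym _ _
  constructor
  · intro hT
    have hz : ∀ g : H, (inner ℂ ((P ∘L S ∘L P - (α : ℂ) • P) g) g : ℂ) = 0 := by
      intro g
      have hPg : P g ∈ LinearMap.range (P : H →ₗ[ℂ] H) := ⟨g, rfl⟩
      have h5 := hT (P g) hPg
      simp only [hproj] at h5
      have hPP : P (P g) = P g := by
        have := DFunLike.congr_fun hP g
        simpa using this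
      rw [hPP] at h5
      have h6 := key (P g)
      rw [h5] at h6
      have h7 : (inner ℂ (P ((S (P g)))) g : ℂ) = inner ℂ (S (P g)) (P g) := hsym _ _
      have h8 : (inner ℂ (P g) g : ℂ) = inner ℂ (P g) (P g) := by
        conv_lhs => rw [← hPP]
        exact hsym _ _
      have h10 : (inner ℂ (S (P g)) (P g) : ℂ) = ((α * ‖P g‖ ^ 2 : ℝ) : ℂ) := by
        rw [← inner_conj_symm, h6, Complex.conj_ofReal]
      simp only [ContinuousLinearMap.sub_apply, ContinuousLinearMap.comp_apply,
        ContinuousLinearMap.smul_apply, inner_sub_left, inner_smul_left, h7, h8, h10]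
      rw [inner_self_eq_norm_sq_to_K, Complex.conj_ofReal]
      push_cast
      exact sub_self _
    have := (inner_map_self_eq_zero ((P ∘L S ∘L P - (α : ℂ) • P) : H →ₗ[ℂ] H)).mp hz
    have heq : ((P ∘L S ∘L P - (α : ℂ) • P) : H →L[ℂ] H) = 0 := by
      ext g
      exact congrFun (congrArg DFunLike.coe this) g
    exact sub_eq_zero.mp heq
  · intro hEq f hf
    obtain ⟨g, rfl⟩ := hf
    have hPP : P (P g) = P g := by
      have := DFunLike.congr_fun hP g
      simpa using this
    have hEq' : P (S (P g)) = (α : ℂ) • P g := by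
      have := DFunLike.congr_fun hEq (P g)
      simpa [hPP] using this
    have h9 : (inner ℂ (P g) (S (P g)) : ℂ) = (α : ℂ) * ((‖P g‖ ^ 2 : ℝ) : ℂ) := by
      calc (inner ℂ (P g) (S (P g)) : ℂ) = inner ℂ (P (P g)) (S (P g)) := by rw [hPP]
        _ = inner ℂ (P g) (P (S (P g))) := hsym _ _
        _ = (α : ℂ) * inner ℂ (P g) (P g) := by rw [hEq', inner_smul_right]
        _ = _ := by rw [inner_self_eq_norm_sq_to_K]; norm_cast; push_cast; rfl
    have h6 := key (P g)
    rw [h9] at h6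
    simp only [ContinuousLinearMap.coe_coe, hproj, hPP]
    have : ((α * ‖P g‖ ^ 2 : ℝ) : ℂ) = ((∑' i, ‖(inner ℂ (v i) (P g) : ℂ)‖ ^ 2 : ℝ) : ℂ) := by
      rw [← h6]; push_cast; ring
    exact_mod_cast this.symm
end

section
/- Let E be a bounded positive diagonalizable operator on a separable infinite dimensional Hilbert space with an orthonormal basis of eigenvectors having eigenvalues {λ_i}_{i∈ℕ}. Suppose there exists α > 0 such that both {i : λ_i < α} and {i : λ_i ≥ α} are infinite. Then there exists an orthogonal projection P onto an infinite dimensional subspace such that P E P = α P. -/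
open scoped InnerProductSpace ComplexConjugate

/-- If a positive diagonalizable operator has infinitely many eigenvalues `< α` and
infinitely many eigenvalues `≥ α` for some `α > 0`, then it can be compressed to
`α` times a projection of infinite rank. -/
theorem diagonalizable_positive_compression
    {H : Type*} [NormedAddCommGroup H] [InnerProductSpace ℂ H] [CompleteSpace H]
    (E : H →L[ℂ] H) (hpos : E.IsPositive)
    (e : ℕ → H) (he : Orthonormal ℂ e)
    (hspan : (Submodule.span ℂ (Set.range e)).topologicalClosure = ⊤)
    (lam : ℕ → ℝ) (hnn : ∀ i, 0 ≤ lam i) (heig : ∀ i, E (e i) = (lam i : ℂ) • e i)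
    (α : ℝ) (hα : 0 < α)
    (hlt : {i | lam i < α}.Infinite) (hge : {i | α ≤ lam i}.Infinite) :
    ∃ P : H →L[ℂ] H, IsIdempotentElem P ∧ IsSelfAdjoint P ∧
      ¬ FiniteDimensional ℂ (LinearMap.range (P : H →ₗ[ℂ] H)) ∧ P ∘L E ∘L P = (α : ℂ) • P := by
  classical
  -- choose disjoint sequences of indices with small / large eigenvalues
  set A := hlt.natEmbedding
  set B := hge.natEmbedding
  set a : ℕ → ℕ := fun k => (A k : ℕ) with ha_def
  set b : ℕ → ℕ := fun k => (B k : ℕ) with hb_def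
  have ha_lt : ∀ k, lam (a k) < α := fun k => (A k).2
  have hb_ge : ∀ k, α ≤ lam (b k) := fun k => (B k).2
  have ha_inj : Function.Injective a := fun i j h => A.injective (Subtype.ext h)
  have hb_inj : Function.Injective b := fun i j h => B.injective (Subtype.ext h)
  have hab : ∀ i j, a i ≠ b j := by
    intro i j h
    exact absurd (h ▸ hb_ge j) (not_le.mpr (ha_lt i))
  -- coefficients
  set t : ℕ → ℝ := fun k => (lam (b k) - α) / (lam (b k) - lam (a k)) with ht_def
  have hden : ∀ k, 0 < lam (b k) - lam (a k) := fun k => by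
    have := lt_of_lt_of_le (ha_lt k) (hb_ge k); linarith
  have ht0 : ∀ k, 0 ≤ t k := fun k =>
    div_nonneg (by linarith [hb_ge k]) (le_of_lt (hden k))
  have ht1 : ∀ k, t k ≤ 1 := fun k => by
    rw [div_le_one (hden k)]; linarith [ha_lt k]
  set c : ℕ → ℝ := fun k => Real.sqrt (t k) with hc_def
  set s : ℕ → ℝ := fun k => Real.sqrt (1 - t k) with hs_def
  have hc2 : ∀ k, c k ^ 2 = t k := fun k => Real.sq_sqrt (ht0 k)
  have hs2 : ∀ k, s k ^ 2 = 1 - t k := fun k => Real.sq_sqrt (by linarith [ht1 k])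
  have hcs : ∀ k, c k ^ 2 + s k ^ 2 = 1 := fun k => by rw [hc2, hs2]; ring
  have hkey : ∀ k, c k ^ 2 * lam (a k) + s k ^ 2 * lam (b k) = α := by
    intro k
    have h := (hden k).ne'
    have ht : t k * (lam (b k) - lam (a k)) = lam (b k) - α := div_mul_cancel₀ _ h
    rw [hc2, hs2]
    linear_combination -ht
  -- the vectors
  set f : ℕ → H := fun k => (c k : ℂ) • e (a k) + (s k : ℂ) • e (b k) with hf_def
  have hee : ∀ i j : ℕ, ⟪e i, e j⟫_ℂ = if i = j then 1 else 0 :=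
    fun i j => orthonormal_iff_ite.mp he i j
  -- inner products with f
  have hinner : ∀ j k, ⟪f j, f k⟫_ℂ = if j = k then 1 else 0 := by
    intro j k
    simp only [hf_def, inner_add_add_self, inner_add_left, inner_add_right,
      inner_smul_left, inner_smul_right, hee, Complex.conj_ofReal]
    by_cases h : j = k
    · subst h
      simp only [if_pos rfl, if_neg (hab j j), if_neg (Ne.symm (hab j j))]
      have h1 : ((c j ^ 2 + s j ^ 2 : ℝ) : ℂ) = 1 := by rw [hcs j]; norm_num
      push_cast at h1
      simp only [if_true]
      linear_combination h1
    · have h1 : a j ≠ a k := fun hh => h (ha_inj hh)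
      have h2 : b j ≠ b k := fun hh => h (hb_inj hh)
      simp [if_neg h1, if_neg h2, if_neg (hab j k), if_neg (Ne.symm (hab k j)), if_neg h]
  have hf_on : Orthonormal ℂ f := orthonormal_iff_ite.mpr hinner
  -- the subspace and projection
  set K := (Submodule.span ℂ (Set.range f)).topologicalClosure with hK_def
  haveI : CompleteSpace K :=
    (Submodule.isClosed_topologicalClosure _).completeSpace_coe
  set P : H →L[ℂ] H := K.subtypeL ∘L K.orthogonalProjectionOnto with hP_def
  have hPmem : ∀ x : H, P x ∈ K := fun x => (K.orthogonalProjectionOnto x).2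
  have hPfix : ∀ v ∈ K, P v = v := by
    intro v hv
    simp only [hP_def, ContinuousLinearMap.comp_apply, Submodule.subtypeL_apply]
    exact (Submodule.starProjection_eq_self_iff (K := K)).mpr hv
  have hfK : ∀ k, f k ∈ K :=
    fun k => Submodule.le_topologicalClosure _ (Submodule.subset_span ⟨k, rfl⟩)
  refine ⟨P, ?_, ?_, ?_, ?_⟩
  · -- idempotent
    ext x
    exact hPfix _ (hPmem x)
  · exact isSelfAdjoint_starProjection K
  · -- infinite rank
    intro hfin
    have hmem : ∀ k, f k ∈ LinearMap.range (P : H →ₗ[ℂ] H) := fun k => ⟨f k, hPfix _ (hfK k)⟩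
    set g : ℕ → LinearMap.range (P : H →ₗ[ℂ] H) := fun k => ⟨f k, hmem k⟩ with hg_def
    have hgli : LinearIndependent ℂ g := by
      have : LinearIndependent ℂ ((LinearMap.range (P : H →ₗ[ℂ] H)).subtype ∘ g) := by
        exact hf_on.linearIndependent
      exact LinearIndependent.of_comp _ this
    exact Module.Finite.not_linearIndependent_of_infinite g hgli
  · -- the compression identity
    set T : H →L[ℂ] H := P ∘L E - (α : ℂ) • ContinuousLinearMap.id ℂ H with hT_def
    have hTf : ∀ k, f k ∈ LinearMap.ker (T : H →ₗ[ℂ] H) := by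
      intro k
      have hEf : E (f k) = (α : ℂ) • f k +
          (((c k) * (lam (a k) - α) : ℝ) : ℂ) • e (a k) +
          (((s k) * (lam (b k) - α) : ℝ) : ℂ) • e (b k) := by
        simp only [hf_def, map_add, map_smul, heig]
        push_cast
        module
      set w : H := (((c k) * (lam (a k) - α) : ℝ) : ℂ) • e (a k) +
          (((s k) * (lam (b k) - α) : ℝ) : ℂ) • e (b k) with hw_def
      have hworth : w ∈ (Submodule.span ℂ (Set.range f))ᗮ := by
        rw [Submodule.mem_orthogonal]
        intro u hu
        induction hu using Submodule.span_induction with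
        | mem u hu =>
          obtain ⟨j, rfl⟩ := hu
          simp only [hw_def, hf_def, inner_add_left, inner_add_right,
            inner_smul_left, inner_smul_right, hee, Complex.conj_ofReal]
          by_cases h : j = k
          · subst h
            simp only [if_pos rfl, if_neg (hab j j), if_neg (Ne.symm (hab j j))]
            have h1 := hkey j
            have h2 := hcs j
            have h3 : (c j) * ((c j) * (lam (a j) - α)) + (s j) * ((s j) * (lam (b j) - α)) = 0 := by
              nlinarith [hc2 j, hs2 j]
            have h4 : (((c j) * ((c j) * (lam (a j) - α)) +
                (s j) * ((s j) * (lam (b j) - α)) : ℝ) : ℂ) = 0 := by rw [h3]; norm_num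
            push_cast at h4 ⊢
            linear_combination h4
          · have h1 : a j ≠ a k := fun hh => h (ha_inj hh)
            have h2 : b j ≠ b k := fun hh => h (hb_inj hh)
            simp [if_neg h1, if_neg h2, if_neg (hab j k), if_neg (Ne.symm (hab k j))]
        | zero => simp
        | add u v _ _ hu hv => simp [inner_add_left, hu, hv]
        | smul r u _ hu => simp [inner_smul_left, hu]
      have hwK : w ∈ Kᗮ := by
        rw [hK_def, ← Submodule.orthogonal_orthogonal_eq_closure]
        exact Submodule.le_orthogonal_orthogonal _ hworth
      have hPw : P w = 0 := by
        simp only [hP_def, ContinuousLinearMap.comp_apply, Submodule.subtypeL_apply]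
        rw [Submodule.orthogonalProjectionOnto_eq_zero_iff.mpr hwK]
        simp
      rw [LinearMap.mem_ker, ContinuousLinearMap.coe_coe]
      have : T (f k) = P (E (f k)) - (α : ℂ) • f k := by
        simp [hT_def, ContinuousLinearMap.sub_apply]
      rw [this, hEf]
      have : P ((α : ℂ) • f k + (((c k) * (lam (a k) - α) : ℝ) : ℂ) • e (a k) +
          (((s k) * (lam (b k) - α) : ℝ) : ℂ) • e (b k))
          = (α : ℂ) • P (f k) + P w := by
        rw [hw_def]
        simp only [map_add, map_smul]
        abel
      rw [this, hPw, hPfix _ (hfK k)]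
      simp
    have hKker : K ≤ LinearMap.ker (T : H →ₗ[ℂ] H) := by
      rw [hK_def]
      have hle : Submodule.span ℂ (Set.range f) ≤ LinearMap.ker (T : H →ₗ[ℂ] H) := by
        rw [Submodule.span_le]
        rintro u ⟨k, rfl⟩
        exact hTf k
      exact Submodule.topologicalClosure_minimal _ hle (ContinuousLinearMap.isClosed_ker T)
    ext x
    have hx : T (P x) = 0 := hKker (hPmem x)
    have : P (E (P x)) = (α : ℂ) • P x := by
      have := hx
      simp only [hT_def, ContinuousLinearMap.sub_apply, ContinuousLinearMap.comp_apply,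
        ContinuousLinearMap.smul_apply, ContinuousLinearMap.id_apply, sub_eq_zero] at this
      exact this
    simpa [ContinuousLinearMap.comp_apply] using this
end

section
/- Let P and K be bounded operators on an infinite dimensional Hilbert space, where P is an orthogonal projection and K is a positive operator with finite dimensional kernel. If P K P has finite rank, then P has finite rank. -/
open scoped InnerProductSpace

open ContinuousLinearMap in
/-- If `K` is a positive operator and `re ⟪K x, x⟫ = 0`, then `K x = 0`. -/
lemma apply_eq_zero_of_isPositive_of_inner_eq_zero
    {H : Type*} [NormedAddCommGroup H] [InnerProductSpace ℂ H] [CompleteSpace H]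
    (K : H →L[ℂ] H) (hK : K.IsPositive) (x : H) (hx : RCLike.re ⟪K x, x⟫_ℂ = 0) :
    K x = 0 := by
  set y := K x with hy
  have hsa : ∀ u v : H, ⟪K u, v⟫_ℂ = ⟪u, K v⟫_ℂ := by
    intro u v
    rw [← ContinuousLinearMap.adjoint_inner_left, hK.isSelfAdjoint.adjoint_eq]
  set a : ℝ := ‖y‖ ^ 2 with ha
  set c : ℝ := RCLike.re ⟪K y, y⟫_ℂ with hc
  have hc0 : 0 ≤ c := (RCLike.nonneg_iff.mp (hK.inner_nonneg_left y)).1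
  have key : ∀ t : ℝ, 0 ≤ 2 * t * a + t ^ 2 * c := by
    intro t
    have h := (RCLike.nonneg_iff.mp (hK.inner_nonneg_left (x + (t : ℂ) • y))).1
    have hexp : ⟪K (x + (t : ℂ) • y), x + (t : ℂ) • y⟫_ℂ
        = ⟪y, x⟫_ℂ + (t : ℂ) * ⟪y, y⟫_ℂ + (starRingEnd ℂ) (t : ℂ) * ⟪K y, x⟫_ℂ
          + (starRingEnd ℂ) (t : ℂ) * ((t : ℂ) * ⟪K y, y⟫_ℂ) := by
      rw [map_add, map_smul, ← hy]
      simp only [inner_add_left, inner_add_right, inner_smul_left, inner_smul_right]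
      ring
    have hKyx : ⟪K y, x⟫_ℂ = ⟪y, y⟫_ℂ := by
      rw [hsa y x, ← hy]
    have hyy : ⟪y, y⟫_ℂ = (a : ℂ) := by
      rw [ha, inner_self_eq_norm_sq_to_K]
      norm_num
    rw [hexp, hKyx, hyy] at h
    simp only [Complex.conj_ofReal] at h
    have hre : RCLike.re (⟪y, x⟫_ℂ + (t : ℂ) * (a : ℂ) + (t : ℂ) * (a : ℂ)
        + (t : ℂ) * ((t : ℂ) * ⟪K y, y⟫_ℂ)) = 2 * t * a + t ^ 2 * c := by
      simp only [map_add, RCLike.re_to_complex, Complex.re_ofReal_mul,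
        Complex.ofReal_re]
      rw [show (⟪y, x⟫_ℂ).re = 0 from hx, hc, RCLike.re_to_complex]
      ring
    rw [hre] at h
    exact h
  have ha0 : 0 ≤ a := by positivity
  have haz : a = 0 := by
    by_contra hne
    have hapos : 0 < a := lt_of_le_of_ne ha0 (Ne.symm hne)
    have hcpos : 0 < c + 1 := by linarith
    set u : ℝ := a / (c + 1) with hu
    have hupos : 0 < u := div_pos hapos hcpos
    have hau : a = u * (c + 1) := by
      rw [hu]; field_simp
    have hlast := key (-u)
    nlinarith [mul_pos hupos hupos, mul_pos hupos hapos]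
  have hnorm : ‖y‖ = 0 := by
    have := pow_eq_zero_iff (n := 2) (by norm_num) |>.mp haz
    exact this
  simpa [hy] using norm_eq_zero.mp hnorm

/-- If `K` is positive with finite dimensional kernel and `P` is a projection such that
`P K P` has finite rank, then `P` has finite rank. -/
theorem finite_rank_of_compression_finite_rank
    {H : Type*} [NormedAddCommGroup H] [InnerProductSpace ℂ H] [CompleteSpace H]
    (hinf : ¬ FiniteDimensional ℂ H)
    (P K : H →L[ℂ] H) (hP : IsIdempotentElem P) (hPsa : IsSelfAdjoint P)
    (hKpos : K.IsPositive) (hker : FiniteDimensional ℂ (LinearMap.ker (K : H →ₗ[ℂ] H)))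
    (hfr : FiniteDimensional ℂ (LinearMap.range ((P ∘L K ∘L P : H →L[ℂ] H) : H →ₗ[ℂ] H))) :
    FiniteDimensional ℂ (LinearMap.range (P : H →ₗ[ℂ] H)) := by
  classical
  set M : Submodule ℂ H := LinearMap.range (P : H →ₗ[ℂ] H) with hM
  set f : M →ₗ[ℂ] H := (P ∘L K ∘L P : H →L[ℂ] H).toLinearMap.comp M.subtype with hf
  have hfix : ∀ x : H, x ∈ M → P x = x := by
    intro x hx
    obtain ⟨y, rfl⟩ := hx
    have := congrArg (fun T : H →L[ℂ] H => T y) hP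
    simpa [ContinuousLinearMap.mul_apply] using this
  have hrange : FiniteDimensional ℂ (LinearMap.range f) := by
    have hle : LinearMap.range f ≤ LinearMap.range ((P ∘L K ∘L P : H →L[ℂ] H) : H →ₗ[ℂ] H) := by
      rintro _ ⟨x, rfl⟩
      exact ⟨(x : H), rfl⟩
    exact Submodule.finiteDimensional_of_le hle
  have hkerf : FiniteDimensional ℂ (LinearMap.ker f) := by
    set g : LinearMap.ker f →ₗ[ℂ] LinearMap.ker (K : H →ₗ[ℂ] H) :=
      { toFun := fun x => ⟨((x : M) : H), by
          have hx : f (x : M) = 0 := x.2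
          have hxM : ((x : M) : H) ∈ M := (x : M).2
          have hPx : P ((x : M) : H) = ((x : M) : H) := hfix _ hxM
          have hPKP : P (K (P ((x : M) : H))) = 0 := hx
          have hinner : RCLike.re ⟪K ((x : M) : H), ((x : M) : H)⟫_ℂ = 0 := by
            have h1 : ⟪K ((x : M) : H), ((x : M) : H)⟫_ℂ = 0 := by
              calc ⟪K ((x : M) : H), ((x : M) : H)⟫_ℂ
                  = ⟪K (P ((x : M) : H)), P ((x : M) : H)⟫_ℂ := by rw [hPx]
                _ = ⟪(ContinuousLinearMap.adjoint P) (K (P ((x : M) : H))),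
                      ((x : M) : H)⟫_ℂ := by
                    rw [ContinuousLinearMap.adjoint_inner_left]
                _ = ⟪P (K (P ((x : M) : H))), ((x : M) : H)⟫_ℂ := by
                    rw [hPsa.adjoint_eq]
                _ = 0 := by rw [hPKP]; simp
            rw [h1]
            simp
          have := apply_eq_zero_of_isPositive_of_inner_eq_zero K hKpos _ hinner
          simpa [LinearMap.mem_ker] using this⟩
        map_add' := by intros; rfl
        map_smul' := by intros; rfl }
    have hginj : Function.Injective g := by
      intro x y hxy
      have h1 := congrArg Subtype.val hxy
      exact Subtype.ext (Subtype.ext h1)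
    exact FiniteDimensional.of_injective g hginj
  have h := LinearMap.rank_range_add_rank_ker f
  have hlt : Module.rank ℂ M < Cardinal.aleph0 := by
    rw [← h]
    exact Cardinal.add_lt_aleph0 (Module.rank_lt_aleph0 ℂ _) (Module.rank_lt_aleph0 ℂ _)
  exact Module.rank_lt_aleph0_iff.mp hlt
end

section
/- Let H be an infinite dimensional Hilbert space with orthonormal basis {e_n}_{n≥1}, and let φ_n = (2 − 1/n)^{1/2} e_n. Then {φ_n} is a frame for H, and there is no orthogonal projection P onto an infinite dimensional subspace H₀ such that {P φ_n} is a tight frame for H₀. -/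
/-- Parseval identity for an orthonormal family with dense span. -/
lemma parseval_aux {H : Type*} [NormedAddCommGroup H] [InnerProductSpace ℂ H] [CompleteSpace H]
    (e : ℕ → H) (he : Orthonormal ℂ e)
    (hspan : (Submodule.span ℂ (Set.range e)).topologicalClosure = ⊤) (f : H) :
    HasSum (fun n => ‖(inner ℂ (e n) f : ℂ)‖ ^ 2) (‖f‖ ^ 2) := by
  let b : HilbertBasis ℕ ℂ H := HilbertBasis.mk he (by rw [hspan])
  have hbe : ∀ n, b n = e n := fun n => congrFun (HilbertBasis.coe_mk he _) n
  have h := b.hasSum_inner_mul_inner f f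
  rw [inner_self_eq_norm_sq_to_K (𝕜 := ℂ)] at h
  have heq : (fun n => (inner ℂ f (b n) : ℂ) * inner ℂ (b n) f)
      = fun n => ((‖(inner ℂ (e n) f : ℂ)‖ ^ 2 : ℝ) : ℂ) := by
    funext n
    rw [hbe n]
    have hconj : (inner ℂ f (e n) : ℂ) = (starRingEnd ℂ) (inner ℂ (e n) f) :=
      (inner_conj_symm _ _).symm
    rw [hconj, Complex.conj_mul']
    push_cast
    ring
  rw [heq] at h
  have h' : HasSum (fun n => ((‖(inner ℂ (e n) f : ℂ)‖ ^ 2 : ℝ) : ℂ)) ((‖f‖ ^ 2 : ℝ) : ℂ) := by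
    rw [Complex.ofReal_pow ‖f‖ 2]
    exact h
  exact Complex.hasSum_ofReal.mp h'

lemma weight_one (n : ℕ) : 1 ≤ 2 - 1 / ((n : ℝ) + 1) := by
  have h1 : (1 : ℝ) / ((n : ℝ) + 1) ≤ 1 := by
    rw [div_le_one (by positivity)]; linarith [Nat.cast_nonneg (α := ℝ) n]
  linarith

lemma weight_two (n : ℕ) : 2 - 1 / ((n : ℝ) + 1) < 2 := by
  have h1 : (0 : ℝ) < 1 / ((n : ℝ) + 1) := by positivity
  linarith

lemma weight_mono {m n : ℕ} (hmn : m ≤ n) :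
    2 - 1 / ((m : ℝ) + 1) ≤ 2 - 1 / ((n : ℝ) + 1) := by
  have : (1 : ℝ) / ((n : ℝ) + 1) ≤ 1 / ((m : ℝ) + 1) := by
    apply one_div_le_one_div_of_le (by positivity)
    have := (Nat.cast_le (α := ℝ)).2 hmn
    linarith
  linarith

lemma hasSum_zero_forall {g : ℕ → ℝ} (hg : HasSum g 0) (hnn : ∀ n, 0 ≤ g n) (n : ℕ) :
    g n = 0 := by
  have h1 : g n ≤ ∑' m, g m := Summable.le_tsum hg.summable n fun m _ => hnn m
  rw [hg.tsum_eq] at h1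
  exact le_antisymm h1 (hnn n)

set_option maxHeartbeats 1000000 in
/-- The frame `φ n = (2 - 1/(n+1))^{1/2} e n` cannot be projected to a tight frame
for any infinite dimensional subspace. -/
theorem example_frame_no_tight_projection
    {H : Type*} [NormedAddCommGroup H] [InnerProductSpace ℂ H] [CompleteSpace H]
    (e : ℕ → H) (he : Orthonormal ℂ e)
    (hspan : (Submodule.span ℂ (Set.range e)).topologicalClosure = ⊤)
    (φ : ℕ → H) (hφ : ∀ n, φ n = ((Real.sqrt (2 - 1 / ((n : ℝ) + 1)) : ℝ) : ℂ) • e n) :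
    (∃ A B : ℝ, 0 < A ∧ A ≤ B ∧ ∀ f : H,
        A * ‖f‖ ^ 2 ≤ ∑' n, ‖(inner ℂ (φ n) f : ℂ)‖ ^ 2 ∧
        ∑' n, ‖(inner ℂ (φ n) f : ℂ)‖ ^ 2 ≤ B * ‖f‖ ^ 2) ∧
    ¬ ∃ (P : H →L[ℂ] H) (α : ℝ), IsIdempotentElem P ∧ IsSelfAdjoint P ∧
        ¬ FiniteDimensional ℂ (LinearMap.range (P : H →ₗ[ℂ] H)) ∧ 0 < α ∧
        ∀ f ∈ LinearMap.range (P : H →ₗ[ℂ] H), ∑' n, ‖(inner ℂ (P (φ n)) f : ℂ)‖ ^ 2 = α * ‖f‖ ^ 2 := by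
  classical
  -- key pointwise formula
  have hkey : ∀ (n : ℕ) (f : H),
      ‖(inner ℂ (φ n) f : ℂ)‖ ^ 2 = (2 - 1 / ((n : ℝ) + 1)) * ‖(inner ℂ (e n) f : ℂ)‖ ^ 2 := by
    intro n f
    have hcnn : (0 : ℝ) ≤ 2 - 1 / ((n : ℝ) + 1) := le_trans zero_le_one (weight_one n)
    rw [hφ n, inner_smul_left, Complex.conj_ofReal, norm_mul, mul_pow, Complex.norm_real,
      Real.norm_eq_abs, sq_abs, Real.sq_sqrt hcnn]
  -- summability facts for a fixed f
  have hwsum : ∀ f : H, Summable (fun n => ‖(inner ℂ (φ n) f : ℂ)‖ ^ 2) := by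
    intro f
    have hP := parseval_aux e he hspan f
    refine Summable.of_nonneg_of_le (fun n => by positivity) (fun n => ?_)
      (hP.summable.mul_left 2)
    rw [hkey]
    have h2 := (weight_two n).le
    have hnn : (0 : ℝ) ≤ ‖(inner ℂ (e n) f : ℂ)‖ ^ 2 := by positivity
    nlinarith
  constructor
  · -- frame bounds A = 1, B = 2
    refine ⟨1, 2, one_pos, one_le_two, fun f => ?_⟩
    have hP := parseval_aux e he hspan f
    constructor
    · rw [one_mul, ← hP.tsum_eq]
      refine Summable.tsum_le_tsum (fun n => ?_) hP.summable (hwsum f)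
      rw [hkey]
      have h1 := weight_one n
      have hnn : (0 : ℝ) ≤ ‖(inner ℂ (e n) f : ℂ)‖ ^ 2 := by positivity
      nlinarith
    · have h2 : ∑' n, 2 * ‖(inner ℂ (e n) f : ℂ)‖ ^ 2 = 2 * ‖f‖ ^ 2 := (hP.mul_left 2).tsum_eq
      rw [← h2]
      refine Summable.tsum_le_tsum (fun n => ?_) (hwsum f) (hP.summable.mul_left 2)
      rw [hkey]
      have h2 := (weight_two n).le
      have hnn : (0 : ℝ) ≤ ‖(inner ℂ (e n) f : ℂ)‖ ^ 2 := by positivity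
      nlinarith
  · -- no tight projection
    rintro ⟨P, α, hidem, hsa, hinf, hαpos, htight⟩
    -- P fixes its range
    have hPfix : ∀ f ∈ LinearMap.range (P : H →ₗ[ℂ] H), P f = f := by
      rintro _ ⟨g, rfl⟩
      calc P (P g) = (P * P) g := rfl
        _ = P g := by rw [hidem]
    -- P is symmetric
    have hadj : ContinuousLinearMap.adjoint P = P :=
      (ContinuousLinearMap.isSelfAdjoint_iff').1 hsa
    have hsym : ∀ x y : H, (inner ℂ (P x) y : ℂ) = inner ℂ x (P y) := by
      intro x y
      conv_lhs => rw [← hadj]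
      rw [ContinuousLinearMap.adjoint_inner_left]
    -- tight frame identity in terms of e
    have htight' : ∀ f ∈ LinearMap.range (P : H →ₗ[ℂ] H),
        HasSum (fun n : ℕ => (2 - 1 / ((n : ℝ) + 1)) * ‖(inner ℂ (e n) f : ℂ)‖ ^ 2)
          (α * ‖f‖ ^ 2) := by
      intro f hf
      have heq : ∀ n, ‖(inner ℂ (P (φ n)) f : ℂ)‖ ^ 2
          = (2 - 1 / ((n : ℝ) + 1)) * ‖(inner ℂ (e n) f : ℂ)‖ ^ 2 := by
        intro n
        rw [hsym, hPfix f hf, hkey]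
      have hs : Summable (fun n : ℕ => ‖(inner ℂ (P (φ n)) f : ℂ)‖ ^ 2) := by
        have h0 := hwsum f
        simp only [hkey] at h0
        simpa only [heq] using h0
      have := hs.hasSum
      rw [htight f hf] at this
      simpa only [heq] using this
    -- main contradiction: find a nonzero f in range P whose coefficients all vanish
    by_cases hα2 : 2 ≤ α
    · -- then range P = ⊥, contradicting infinite-dimensionality
      have hbot : ∀ f ∈ LinearMap.range (P : H →ₗ[ℂ] H), f = 0 := by
        intro f hf
        have hw := parseval_aux e he hspan f
        have hd : HasSum (fun n : ℕ => α * ‖(inner ℂ (e n) f : ℂ)‖ ^ 2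
            - (2 - 1 / ((n : ℝ) + 1)) * ‖(inner ℂ (e n) f : ℂ)‖ ^ 2) 0 := by
          have := (hw.mul_left α).sub (htight' f hf)
          simpa using this
        have hdz := hasSum_zero_forall hd (fun n => by
          have h2 := (weight_two n).le
          have hnn : (0 : ℝ) ≤ ‖(inner ℂ (e n) f : ℂ)‖ ^ 2 := by positivity
          nlinarith)
        have hwz : ∀ n, ‖(inner ℂ (e n) f : ℂ)‖ ^ 2 = 0 := by
          intro n
          have h1 := hdz n
          have h2 := weight_two n
          have hnn : (0 : ℝ) ≤ ‖(inner ℂ (e n) f : ℂ)‖ ^ 2 := by positivity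
          nlinarith
        have : HasSum (fun n : ℕ => (0 : ℝ)) (‖f‖ ^ 2) := by
          simpa only [hwz] using hw
        have := this.unique hasSum_zero
        have : ‖f‖ = 0 := by nlinarith [norm_nonneg f]
        exact norm_eq_zero.1 this
      have hrange : LinearMap.range (P : H →ₗ[ℂ] H) = ⊥ := by
        rw [eq_bot_iff]
        intro f hf
        simpa using hbot f hf
      rw [hrange] at hinf
      exact hinf inferInstance
    · push_neg at hα2
      -- pick N with α < 2 - 1/(N+1)
      set N : ℕ := ⌈1 / (2 - α)⌉₊ with hN
      have hαN : α < 2 - 1 / ((N : ℝ) + 1) := by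
        have h2α : (0 : ℝ) < 2 - α := by linarith
        have h1 : (1 : ℝ) / (2 - α) ≤ N := Nat.le_ceil _
        have h2 : (1 : ℝ) / (2 - α) < (N : ℝ) + 1 := by linarith
        have h3 : (1 : ℝ) / ((N : ℝ) + 1) < 2 - α := by
          rw [div_lt_iff₀ (by positivity)] at h2 ⊢
          · nlinarith
        linarith
      -- the coefficient map to ℂ^N is not injective
      set L : ↥(LinearMap.range (P : H →ₗ[ℂ] H)) →ₗ[ℂ] (Fin N → ℂ) :=
        LinearMap.pi (fun i => (innerSL ℂ (e (i : ℕ))).toLinearMap.comp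
          (LinearMap.range (P : H →ₗ[ℂ] H)).subtype) with hL
      have hLni : ¬ Function.Injective L := fun hinj =>
        hinf (FiniteDimensional.of_injective L hinj)
      rw [← LinearMap.ker_eq_bot] at hLni
      obtain ⟨x, hxker, hxne⟩ := (Submodule.ne_bot_iff _).1 hLni
      set f : H := (x : H) with hf
      have hfmem : f ∈ LinearMap.range (P : H →ₗ[ℂ] H) := x.2
      have hfne : f ≠ 0 := fun h => hxne (Subtype.ext h)
      have hcoef : ∀ i : Fin N, (inner ℂ (e (i : ℕ)) f : ℂ) = 0 := by
        intro i
        have := congrFun (LinearMap.mem_ker.1 hxker) i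
        simpa [hL] using this
      have hcoef' : ∀ n : ℕ, n < N → ‖(inner ℂ (e n) f : ℂ)‖ ^ 2 = 0 := by
        intro n hn
        have := hcoef ⟨n, hn⟩
        simp [this]
      -- the difference series
      have hw := parseval_aux e he hspan f
      have hd : HasSum (fun n : ℕ => (2 - 1 / ((n : ℝ) + 1)) * ‖(inner ℂ (e n) f : ℂ)‖ ^ 2
          - α * ‖(inner ℂ (e n) f : ℂ)‖ ^ 2) 0 := by
        have := (htight' f hfmem).sub (hw.mul_left α)
        simpa using this
      have hdn : ∀ n : ℕ, 0 ≤ (2 - 1 / ((n : ℝ) + 1)) * ‖(inner ℂ (e n) f : ℂ)‖ ^ 2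
          - α * ‖(inner ℂ (e n) f : ℂ)‖ ^ 2 := by
        intro n
        by_cases hn : n < N
        · rw [hcoef' n hn]; ring_nf; exact le_refl 0
        · push_neg at hn
          have h1 := weight_mono hn
          have hnn : (0 : ℝ) ≤ ‖(inner ℂ (e n) f : ℂ)‖ ^ 2 := by positivity
          nlinarith
      have hdz := hasSum_zero_forall hd hdn
      have hwz : ∀ n, ‖(inner ℂ (e n) f : ℂ)‖ ^ 2 = 0 := by
        intro n
        by_cases hn : n < N
        · exact hcoef' n hn
        · push_neg at hn
          have h1 := weight_mono hn
          have h2 := hdz n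
          have hnn : (0 : ℝ) ≤ ‖(inner ℂ (e n) f : ℂ)‖ ^ 2 := by positivity
          nlinarith
      have : HasSum (fun n : ℕ => (0 : ℝ)) (‖f‖ ^ 2) := by
        simpa only [hwz] using hw
      have hfn := this.unique hasSum_zero
      have : ‖f‖ = 0 := by nlinarith [norm_nonneg f]
      exact hfne (norm_eq_zero.1 this)
end

section
/- Let (X, μ) be a σ-finite measure space and let φ ∈ L^∞(X, μ) be a function that is not equal to a constant on any set of positive measure (i.e., μ(φ⁻¹({c})) = 0 for every c). If y is in the essential range of φ and B is an open set containing y, then φ⁻¹(B) admits a countably infinite partition into measurable sets each of finite positive measure. -/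
open MeasureTheory

/-- If `φ` is essentially bounded, not constant on any set of positive measure, and `y`
is in the essential range of `φ`, then for any open `B ∋ y` the set `φ⁻¹(B)` admits a
countably infinite partition into sets of finite positive measure. -/
theorem partition_of_preimage
    {X : Type*} [MeasurableSpace X] (μ : Measure X) [SigmaFinite μ]
    (φ : X → ℂ) (hmeas : Measurable φ) (hφ : MemLp φ ⊤ μ)
    (hconst : ∀ c : ℂ, μ (φ ⁻¹' {c}) = 0)
    (y : ℂ) (hy : ∀ U : Set ℂ, IsOpen U → y ∈ U → 0 < μ (φ ⁻¹' U))
    (B : Set ℂ) (hB : IsOpen B) (hyB : y ∈ B) :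
    ∃ E : ℕ → Set X, (∀ n, MeasurableSet (E n)) ∧
      (Pairwise fun m n => Disjoint (E m) (E n)) ∧
      (⋃ n, E n) = φ ⁻¹' B ∧ ∀ n, 0 < μ (E n) ∧ μ (E n) < ⊤ := by
  classical
  obtain ⟨ε, hε, hball⟩ := Metric.isOpen_iff.mp hB y hyB
  set U : ℕ → Set ℂ := fun n => Metric.ball y (ε / 2 ^ n) with hU
  have hU0 : U 0 ⊆ B := by
    intro z hz
    exact hball (by simpa [hU] using hz)
  have hUanti : ∀ m n, m ≤ n → U n ⊆ U m := by
    intro m n hmn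
    apply Metric.ball_subset_ball
    gcongr
    · exact one_le_two
  set D : ℕ → Set X := fun n => φ ⁻¹' U n \ φ ⁻¹' U (n + 1) with hD
  have hDmeas : ∀ n, MeasurableSet (D n) := fun n =>
    (hmeas Metric.isOpen_ball.measurableSet).diff (hmeas Metric.isOpen_ball.measurableSet)
  have hDdisj : ∀ m n, m < n → Disjoint (D m) (D n) := by
    intro m n hmn
    refine Set.disjoint_left.2 fun x hxm hxn => ?_
    exact hxm.2 (hUanti (m + 1) n hmn hxn.1)
  -- key claim: arbitrarily large indices k with μ (D k) > 0
  have claim : ∀ n, ∃ k, n ≤ k ∧ 0 < μ (D k) := by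
    intro n
    by_contra hcon
    push_neg at hcon
    have hzero : ∀ k, μ (D (n + k)) = 0 := fun k =>
      le_antisymm (hcon (n + k) (Nat.le_add_right n k)) (zero_le)
    have hsub : φ ⁻¹' U n ⊆ φ ⁻¹' {y} ∪ ⋃ k, D (n + k) := by
      intro x hx
      by_cases hxy : φ x = y
      · exact Or.inl (by simpa using hxy)
      · right
        have hd : 0 < dist (φ x) y := dist_pos.2 hxy
        have hex : ∃ m, φ x ∉ U (n + 1 + m) := by
          obtain ⟨m, hm⟩ := exists_pow_lt_of_lt_one (div_pos hd hε)
            (by norm_num : (1 : ℝ) / 2 < 1)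
          refine ⟨m, fun hmem => ?_⟩
          have h1 : dist (φ x) y < ε / 2 ^ (n + 1 + m) := hmem
          have h2 : ε / 2 ^ (n + 1 + m) ≤ ε / 2 ^ m := by
            gcongr
            · exact one_le_two
            · omega
          have h3 : ((1 : ℝ) / 2) ^ m * ε < dist (φ x) y := (lt_div_iff₀ hε).mp hm
          have h4 : ε / 2 ^ m = (1 / 2 : ℝ) ^ m * ε := by
            rw [div_pow, one_pow]; ring
          linarith [h4 ▸ h2]
        set m0 := Nat.find hex with hm0
        have hspec : φ x ∉ U (n + 1 + m0) := Nat.find_spec hex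
        rcases Nat.eq_zero_or_pos m0 with h0 | hpos
        · refine Set.mem_iUnion.2 ⟨0, hx, ?_⟩
          rw [h0] at hspec
          simpa using hspec
        · have hmem : φ x ∈ U (n + 1 + (m0 - 1)) :=
            not_not.1 (Nat.find_min hex (by omega))
          refine Set.mem_iUnion.2 ⟨m0, ?_, ?_⟩
          · have h : n + 1 + (m0 - 1) = n + m0 := by omega
            rwa [h] at hmem
          · have h : n + 1 + m0 = n + m0 + 1 := by omega
            rwa [h] at hspec
    have hμ0 : μ (φ ⁻¹' U n) = 0 :=
      measure_mono_null hsub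
        (measure_union_null (hconst y) (measure_iUnion_null fun k => hzero k))
    have hpos := hy (U n) Metric.isOpen_ball (Metric.mem_ball_self (by positivity))
    simp [hμ0] at hpos
  choose g hg1 hg2 using claim
  set idx : ℕ → ℕ := fun i => Nat.rec (g 0) (fun _ k => g (k + 1)) i with hidx
  have hidxsucc : ∀ i, idx (i + 1) = g (idx i + 1) := fun i => rfl
  have hidxpos : ∀ i, 0 < μ (D (idx i)) := by
    intro i
    cases i with
    | zero => exact hg2 0
    | succ j => rw [hidxsucc]; exact hg2 (idx j + 1)
  have hidxmono : StrictMono idx := by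
    apply strictMono_nat_of_lt_succ
    intro i
    rw [hidxsucc]
    exact lt_of_lt_of_le (Nat.lt_succ_self _) (hg1 (idx i + 1))
  have hsubs : ∀ i, ∃ t, MeasurableSet t ∧ t ⊆ D (idx i) ∧ 0 < μ t ∧ μ t < ⊤ :=
    fun i => MeasureTheory.Measure.exists_subset_measure_lt_top (hDmeas (idx i)) (hidxpos i)
  choose D' hD'meas hD'sub hD'pos hD'fin using hsubs
  have hD'dis : ∀ m n, m ≠ n → Disjoint (D' m) (D' n) := by
    intro m n hmn
    rcases hmn.lt_or_gt with h | h
    · exact (hDdisj _ _ (hidxmono h)).mono (hD'sub m) (hD'sub n)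
    · exact ((hDdisj _ _ (hidxmono h)).symm).mono (hD'sub m) (hD'sub n)
  have hD'B : ∀ i, D' i ⊆ φ ⁻¹' B := by
    intro i x hx
    exact hU0 (hUanti 0 (idx i) (Nat.zero_le _) ((hD'sub i hx).1))
  set R : Set X := φ ⁻¹' B \ ⋃ i, D' i with hR
  have hRmeas : MeasurableSet R :=
    (hmeas hB.measurableSet).diff (MeasurableSet.iUnion hD'meas)
  set s : ℕ → Set X := disjointed (spanningSets μ) with hs
  have hsmeas : ∀ j, MeasurableSet (s j) :=
    MeasurableSet.disjointed (measurableSet_spanningSets μ)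
  have hsfin : ∀ j, μ (s j) < ⊤ := fun j =>
    (measure_mono (disjointed_subset _ j)).trans_lt (measure_spanningSets_lt_top μ j)
  refine ⟨fun j => D' j ∪ (R ∩ s j), ?_, ?_, ?_, ?_⟩
  · intro j
    exact (hD'meas j).union (hRmeas.inter (hsmeas j))
  · intro m n hmn
    have h1 : Disjoint (D' m) (D' n) := hD'dis m n hmn
    have hRD : ∀ i j, Disjoint (R ∩ s i) (D' j) := by
      intro i j
      refine Set.disjoint_left.2 fun x hx hx' => ?_
      exact hx.1.2 (Set.mem_iUnion.2 ⟨j, hx'⟩)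
    have h4 : Disjoint (R ∩ s m) (R ∩ s n) :=
      (disjoint_disjointed (spanningSets μ) hmn).mono Set.inter_subset_right
        Set.inter_subset_right
    exact Set.disjoint_union_left.2
      ⟨Set.disjoint_union_right.2 ⟨h1, (hRD n m).symm⟩,
       Set.disjoint_union_right.2 ⟨hRD m n, h4⟩⟩
  · have hsu : (⋃ j, s j) = Set.univ := by
      rw [hs, iUnion_disjointed, iUnion_spanningSets]
    calc (⋃ j, D' j ∪ (R ∩ s j))
        = (⋃ j, D' j) ∪ ⋃ j, (R ∩ s j) := Set.iUnion_union_distrib _ _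
      _ = (⋃ j, D' j) ∪ (R ∩ ⋃ j, s j) := by rw [Set.inter_iUnion]
      _ = (⋃ j, D' j) ∪ R := by rw [hsu, Set.inter_univ]
      _ = φ ⁻¹' B := Set.union_diff_cancel (Set.iUnion_subset hD'B)
  · intro j
    constructor
    · exact lt_of_lt_of_le (hD'pos j) (measure_mono Set.subset_union_left)
    · refine lt_of_le_of_lt (measure_union_le _ _) (ENNReal.add_lt_top.2 ⟨hD'fin j, ?_⟩)
      exact (measure_mono Set.inter_subset_right).trans_lt (hsfin j)
end

section
/- Let (X, μ) be a σ-finite measure space and let φ ∈ L^∞(X, μ) be a nonnegative function which is not constant on any set of positive measure, and suppose M_φ is nonzero. Then there exist an orthogonal projection P onto an infinite dimensional subspace of L²(X, μ) and α > 0 such that P M_φ P = α P. -/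
open MeasureTheory Set
open scoped ComplexConjugate ENNReal NNReal


lemma exists_beta {X : Type*} [MeasurableSpace X] (μ' : Measure X) (φ : X → ℝ)
    (hnn : ∀ x, 0 ≤ φ x) (M : ℝ) (hM : ∀ᵐ x ∂μ', φ x ≤ M)
    (hconst : ∀ c : ℝ, μ' (φ ⁻¹' {c}) = 0) (hpos : μ' Set.univ ≠ 0) :
    ∃ β : ℝ, 0 < β ∧ μ' {x | φ x < β} ≠ 0 ∧ μ' {x | β < φ x} ≠ 0 := by
  set S : Set ℝ := {t | μ' {x | φ x < t} = 0} with hS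
  have h0 : (0:ℝ) ∈ S := by
    have : {x | φ x < 0} = (∅ : Set X) := by
      ext x; simp [not_lt.2 (hnn x)]
    simp [hS, this]
  have hMnull : μ' {x | M < φ x} = 0 := by
    have : ∀ᵐ x ∂μ', ¬ (M < φ x) := hM.mono fun x hx => not_lt.2 hx
    simpa [ae_iff] using this
  have hbdd : BddAbove S := by
    refine ⟨M + 1, fun t ht => ?_⟩
    by_contra h
    push_neg at h
    have hsub : {x | φ x ≤ M} ⊆ {x | φ x < t} := fun x hx =>
      lt_of_le_of_lt hx (lt_trans (by linarith) h)
    have : μ' Set.univ ≤ μ' {x | φ x < t} + μ' {x | M < φ x} := by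
      refine le_trans (measure_mono ?_) (measure_union_le _ _)
      intro x _
      rcases le_or_gt (φ x) M with h1 | h1
      · exact Or.inl (hsub h1)
      · exact Or.inr h1
    rw [ht, hMnull] at this
    simpa using hpos (le_antisymm (by simpa using this) zero_le)
  set c := sSup S with hc
  have hc0 : 0 ≤ c := le_csSup hbdd h0
  have hltc : μ' {x | φ x < c} = 0 := by
    have hsub : {x | φ x < c} ⊆ ⋃ n : ℕ, {x | φ x < c - 1/(n+1)} := by
      intro x hx
      obtain ⟨n, hn⟩ := exists_nat_one_div_lt (K := ℝ) (sub_pos.2 hx)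
      exact Set.mem_iUnion.2 ⟨n, by simp only [Set.mem_setOf_eq]; linarith⟩
    refine measure_mono_null hsub (measure_iUnion_null fun n => ?_)
    obtain ⟨s, hsS, hs⟩ := exists_lt_of_lt_csSup ⟨0, h0⟩
      (show c - 1/(n+1) < c by
        have : (0:ℝ) < 1/(n+1) := by positivity
        linarith)
    exact measure_mono_null (fun x hx => lt_of_lt_of_le hx (le_of_lt hs)) hsS
  have hlec : μ' {x | φ x ≤ c} = 0 := by
    have hsub : {x | φ x ≤ c} ⊆ {x | φ x < c} ∪ φ ⁻¹' {c} := by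
      intro x hx
      rcases lt_or_eq_of_le (show φ x ≤ c from hx) with h | h
      · exact Or.inl h
      · exact Or.inr h
    exact measure_mono_null hsub (measure_union_null hltc (hconst c))
  have hgtc : μ' {x | c < φ x} ≠ 0 := by
    intro h
    apply hpos
    refine le_antisymm ?_ zero_le
    calc μ' Set.univ ≤ μ' {x | φ x ≤ c} + μ' {x | c < φ x} := by
          refine le_trans (measure_mono ?_) (measure_union_le _ _)
          intro x _
          rcases le_or_gt (φ x) c with h1 | h1
          · exact Or.inl h1
          · exact Or.inr h1
      _ = 0 := by rw [hlec, h]; simp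
  have : ∃ n : ℕ, μ' {x | c + 1/(n+1) < φ x} ≠ 0 := by
    by_contra h
    push_neg at h
    apply hgtc
    have hsub : {x | c < φ x} ⊆ ⋃ n : ℕ, {x | c + 1/(n+1) < φ x} := by
      intro x hx
      obtain ⟨n, hn⟩ := exists_nat_one_div_lt (K := ℝ) (sub_pos.2 hx)
      exact Set.mem_iUnion.2 ⟨n, by simp only [Set.mem_setOf_eq]; linarith⟩
    exact measure_mono_null hsub (measure_iUnion_null h)
  obtain ⟨n, hn⟩ := this
  refine ⟨c + 1/(n+1), by positivity, ?_, hn⟩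
  intro h
  have : c + 1/(n+1) ≤ c := le_csSup hbdd h
  have h1 : (0:ℝ) < 1/(n+1) := by positivity
  linarith

lemma split_set {X : Type*} [MeasurableSpace X] (μ : Measure X) (φ : X → ℝ)
    (hmeas : Measurable φ) (hnn : ∀ x, 0 ≤ φ x) (M : ℝ) (hM : ∀ᵐ x ∂μ, φ x ≤ M)
    (hconst : ∀ c : ℝ, μ (φ ⁻¹' {c}) = 0)
    (A : Set X) (hA : MeasurableSet A) (h0 : μ A ≠ 0) :
    ∃ B C : Set X, B ⊆ A ∧ C ⊆ A ∧ MeasurableSet B ∧ MeasurableSet C ∧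
      μ B ≠ 0 ∧ μ C ≠ 0 ∧ Disjoint B C := by
  obtain ⟨β, -, h1, h2⟩ := exists_beta (μ.restrict A) φ hnn M (ae_restrict_of_ae hM)
    (fun c => measure_mono_null (fun x hx => hx) ((Measure.restrict_le_self _).trans_eq (hconst c) |>.antisymm zero_le) )
    (by rwa [Measure.restrict_apply_univ])
  have hb : MeasurableSet {x | φ x < β} := measurableSet_lt hmeas measurable_const
  have hc : MeasurableSet {x | β < φ x} := measurableSet_lt measurable_const hmeas
  rw [Measure.restrict_apply hb] at h1
  rw [Measure.restrict_apply hc] at h2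
  refine ⟨{x | φ x < β} ∩ A, {x | β < φ x} ∩ A, Set.inter_subset_right, Set.inter_subset_right,
    hb.inter hA, hc.inter hA, h1, h2, ?_⟩
  exact Disjoint.mono Set.inter_subset_left Set.inter_subset_left
    (Set.disjoint_left.2 fun x hx hx2 => lt_asymm (show φ x < β from hx) (show β < φ x from hx2))

lemma disjoint_family {X : Type*} [MeasurableSpace X] (μ : Measure X) (φ : X → ℝ)
    (hmeas : Measurable φ) (hnn : ∀ x, 0 ≤ φ x) (M : ℝ) (hM : ∀ᵐ x ∂μ, φ x ≤ M)
    (hconst : ∀ c : ℝ, μ (φ ⁻¹' {c}) = 0)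
    (A₀ : Set X) (hA₀ : MeasurableSet A₀) (h0 : μ A₀ ≠ 0) :
    ∃ D : ℕ → Set X, (∀ n, D n ⊆ A₀ ∧ MeasurableSet (D n) ∧ μ (D n) ≠ 0) ∧
      Pairwise (Function.onFun Disjoint D) := by
  have H : ∀ s : Set X, MeasurableSet s → μ s ≠ 0 → ∃ B C : Set X, B ⊆ s ∧ C ⊆ s ∧
      MeasurableSet B ∧ MeasurableSet C ∧ μ B ≠ 0 ∧ μ C ≠ 0 ∧ Disjoint B C :=
    fun s hs h0 => split_set μ φ hmeas hnn M hM hconst s hs h0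
  choose! B C hB1 hC1 hB2 hC2 hB3 hC3 hd using H
  let chain : ℕ → Set X := fun n => Nat.rec A₀ (fun _ s => C s) n
  have hchain0 : chain 0 = A₀ := rfl
  have hchainS : ∀ n, chain (n+1) = C (chain n) := fun n => rfl
  have inv : ∀ n, MeasurableSet (chain n) ∧ μ (chain n) ≠ 0 ∧ chain n ⊆ A₀ := by
    intro n
    induction n with
    | zero => exact ⟨hA₀, h0, le_refl _⟩
    | succ n ih =>
      obtain ⟨h1, h2, h3⟩ := ih
      exact ⟨hC2 _ h1 h2, hC3 _ h1 h2, (hC1 _ h1 h2).trans h3⟩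
  have hanti : ∀ n, chain (n+1) ⊆ chain n := fun n => hC1 _ (inv n).1 (inv n).2.1
  refine ⟨fun n => B (chain n), fun n => ⟨(hB1 _ (inv n).1 (inv n).2.1).trans (inv n).2.2,
    hB2 _ (inv n).1 (inv n).2.1, hB3 _ (inv n).1 (inv n).2.1⟩, ?_⟩
  have key : ∀ m n, m < n → Disjoint (B (chain m)) (B (chain n)) := by
    intro m n hmn
    have h1 : chain n ⊆ chain (m+1) := by
      have step : ∀ k, m + 1 ≤ k → chain k ⊆ chain (m+1) := by
        intro k hk
        induction k with
        | zero => omega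
        | succ k ih =>
          rcases Nat.lt_or_ge (m+1) (k+1) with h | h
          · exact (hanti k).trans (ih (by omega))
          · have : m + 1 = k + 1 := le_antisymm hk h
            rw [this]
      exact step n hmn
    refine Disjoint.mono_right ?_ (hd _ (inv m).1 (inv m).2.1)
    exact (hB1 _ (inv n).1 (inv n).2.1).trans h1
  intro m n hmn
  rcases lt_or_gt_of_ne hmn with h | h
  · exact key m n h
  · exact (key n m h).symm


-- integrability of φ on a finite-measure set
lemma int_on {X : Type*} [MeasurableSpace X] (μ : Measure X) (φ : X → ℝ)
    (hφ : MemLp φ ⊤ μ) (E : Set X) (hfin : μ E ≠ ⊤) :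
    IntegrableOn φ E μ := by
  have h1 : MemLp φ ⊤ (μ.restrict E) := hφ.restrict E
  haveI : IsFiniteMeasure (μ.restrict E) := ⟨by
    rw [Measure.restrict_apply_univ]; exact lt_top_iff_ne_top.2 hfin⟩
  exact (h1.mono_exponent le_top).integrable le_rfl

lemma setint_lt {X : Type*} [MeasurableSpace X] (μ : Measure X) (φ : X → ℝ)
    (hφ : MemLp φ ⊤ μ) (α : ℝ) (E : Set X) (hE : MeasurableSet E)
    (h0 : μ E ≠ 0) (hfin : μ E ≠ ⊤) (hlt : ∀ x ∈ E, φ x < α) :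
    ∫ x in E, φ x ∂μ < α * (μ E).toReal := by
  have hint : IntegrableOn φ E μ := int_on μ φ hφ E hfin
  have hconst : IntegrableOn (fun _ => α) E μ :=
    integrableOn_const hfin
  have hpos : 0 < ∫ x in E, (α - φ x) ∂μ := by
    rw [show (fun x => α - φ x) = (fun _ => α) - φ from rfl,
      setIntegral_pos_iff_support_of_nonneg_ae ?h1 (hconst.sub hint)]
    case h1 =>
      refine (ae_restrict_iff' hE).2 (ae_of_all _ fun x hx => ?_)
      exact sub_nonneg.2 (le_of_lt (hlt x hx))
    refine lt_of_lt_of_le ((zero_le : 0 ≤ μ E).lt_of_ne (Ne.symm h0)) (measure_mono ?_)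
    intro x hx
    refine ⟨?_, hx⟩
    show α - φ x ≠ 0
    exact ne_of_gt (sub_pos.2 (hlt x hx))
  have heq : ∫ x in E, (α - φ x) ∂μ = α * (μ E).toReal - ∫ x in E, φ x ∂μ := by
    rw [integral_sub hconst hint, setIntegral_const, smul_eq_mul, mul_comm, measureReal_def]
  linarith [heq ▸ hpos]

-- finite positive measure subset
lemma finite_sub {X : Type*} [MeasurableSpace X] (μ : Measure X) [SigmaFinite μ]
    (A : Set X) (hA : MeasurableSet A) (h0 : μ A ≠ 0) :
    ∃ B : Set X, B ⊆ A ∧ MeasurableSet B ∧ μ B ≠ 0 ∧ μ B ≠ ⊤ := by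
  have : ∃ n, μ (A ∩ spanningSets μ n) ≠ 0 := by
    by_contra h
    push_neg at h
    apply h0
    have : A = ⋃ n, A ∩ spanningSets μ n := by
      rw [← Set.inter_iUnion, iUnion_spanningSets, Set.inter_univ]
    rw [this]
    exact measure_iUnion_null h
  obtain ⟨n, hn⟩ := this
  exact ⟨A ∩ spanningSets μ n, Set.inter_subset_left,
    hA.inter (measurableSet_spanningSets μ n), hn,
    ne_top_of_le_ne_top (measure_spanningSets_lt_top μ n).ne (measure_mono Set.inter_subset_right)⟩

lemma setint_gt {X : Type*} [MeasurableSpace X] (μ : Measure X) (φ : X → ℝ)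
    (hφ : MemLp φ ⊤ μ) (α : ℝ) (E : Set X) (hE : MeasurableSet E)
    (h0 : μ E ≠ 0) (hfin : μ E ≠ ⊤) (hlt : ∀ x ∈ E, α < φ x) :
    α * (μ E).toReal < ∫ x in E, φ x ∂μ := by
  have h := setint_lt μ (fun x => -φ x) hφ.neg (-α) E hE h0 hfin
    (fun x hx => neg_lt_neg (hlt x hx))
  rw [integral_neg] at h
  linarith

-- inner product of real-coefficient L² elements
lemma inner_ofReal {X : Type*} [MeasurableSpace X] (μ : Measure X) (f g : Lp ℂ 2 μ) (w1 w2 : X → ℝ)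
    (h1 : (f : X → ℂ) =ᵐ[μ] fun x => (w1 x : ℂ)) (h2 : (g : X → ℂ) =ᵐ[μ] fun x => (w2 x : ℂ)) :
    (inner ℂ f g : ℂ) = ((∫ x, w1 x * w2 x ∂μ : ℝ) : ℂ) := by
  rw [MeasureTheory.L2.inner_def]
  have heq : ∫ a, (inner ℂ (f a) (g a) : ℂ) ∂μ = ∫ a, ((w1 a * w2 a : ℝ) : ℂ) ∂μ := by
    apply integral_congr_ae
    filter_upwards [h1, h2] with x hx1 hx2
    rw [RCLike.inner_apply', hx1, hx2]
    simp [Complex.conj_ofReal]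
  rw [heq]
  exact integral_ofReal


/-- A nonzero multiplication operator by a nonnegative essentially bounded function which
is not constant on any set of positive measure can be compressed to a positive multiple of
a projection of infinite rank. -/
theorem multiplication_operator_tight_compression
    {X : Type*} [MeasurableSpace X] (μ : Measure X) [SigmaFinite μ]
    (φ : X → ℝ) (hmeas : Measurable φ) (hnn : ∀ x, 0 ≤ φ x)
    (hφ : MemLp φ ⊤ μ)
    (hconst : ∀ c : ℝ, μ (φ ⁻¹' {c}) = 0)
    (T : Lp ℂ 2 μ →L[ℂ] Lp ℂ 2 μ)
    (hT : ∀ f : Lp ℂ 2 μ, (T f : X → ℂ) =ᵐ[μ] fun x => (φ x : ℂ) * f x)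
    (hT0 : T ≠ 0) :
    ∃ (P : Lp ℂ 2 μ →L[ℂ] Lp ℂ 2 μ) (α : ℝ), IsIdempotentElem P ∧ IsSelfAdjoint P ∧
      ¬ FiniteDimensional ℂ (LinearMap.range (P : Lp ℂ 2 μ →ₗ[ℂ] Lp ℂ 2 μ)) ∧ 0 < α ∧
      P ∘L T ∘L P = (α : ℂ) • P := by
  classical
  -- the measure is nonzero
  have hμ : μ Set.univ ≠ 0 := by
    intro h
    have hμ0 : μ = 0 := by simpa using h
    apply hT0
    apply ContinuousLinearMap.ext
    intro f
    show T f = 0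
    refine Lp.ext ?_
    show ∀ᵐ x ∂μ, (T f : X → ℂ) x = ((0 : Lp ℂ 2 μ) : X → ℂ) x
    rw [ae_iff]
    exact le_antisymm (h ▸ measure_mono (Set.subset_univ _)) zero_le
  -- essential bound
  set M := (eLpNormEssSup φ μ).toReal with hMdef
  have hMne : eLpNormEssSup φ μ ≠ ⊤ := by
    have h2 := hφ.2
    rwa [eLpNorm_exponent_top, lt_top_iff_ne_top] at h2
  have hM : ∀ᵐ x ∂μ, φ x ≤ M := by
    filter_upwards [ae_le_eLpNormEssSup (f := φ) (μ := μ)] with x hx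
    have hxx : ((‖φ x‖₊ : ℝ≥0∞)).toReal ≤ M := ENNReal.toReal_mono hMne hx
    rw [ENNReal.coe_toReal, coe_nnnorm, Real.norm_eq_abs] at hxx
    exact le_trans (le_abs_self _) hxx
  -- pick the level α
  obtain ⟨α, hα, hB0, hC0⟩ := exists_beta μ φ hnn M hM hconst hμ
  -- finite positive measure subsets below and above α
  obtain ⟨B₀, hB₀sub, hB₀m, hB₀0, hB₀fin⟩ :=
    finite_sub μ {x | φ x < α} (measurableSet_lt hmeas measurable_const) hB0
  obtain ⟨C₀, hC₀sub, hC₀m, hC₀0, hC₀fin⟩ :=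
    finite_sub μ {x | α < φ x} (measurableSet_lt measurable_const hmeas) hC0
  -- split into countably many disjoint pieces
  obtain ⟨Bn, hBn, hBdisj⟩ := disjoint_family μ φ hmeas hnn M hM hconst B₀ hB₀m hB₀0
  obtain ⟨Cn, hCn, hCdisj⟩ := disjoint_family μ φ hmeas hnn M hM hconst C₀ hC₀m hC₀0
  have hBm : ∀ n, MeasurableSet (Bn n) := fun n => (hBn n).2.1
  have hCm : ∀ n, MeasurableSet (Cn n) := fun n => (hCn n).2.1
  have hBlt : ∀ n x, x ∈ Bn n → φ x < α := fun n x hx => hB₀sub ((hBn n).1 hx)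
  have hCgt : ∀ n x, x ∈ Cn n → α < φ x := fun n x hx => hC₀sub ((hCn n).1 hx)
  have hBCd : ∀ i j x, x ∈ Bn i → x ∈ Cn j → False :=
    fun i j x hB hC => lt_asymm (hBlt i x hB) (hCgt j x hC)
  have hBfin : ∀ n, μ (Bn n) ≠ ⊤ :=
    fun n => ne_top_of_le_ne_top hB₀fin (measure_mono (hBn n).1)
  have hCfin : ∀ n, μ (Cn n) ≠ ⊤ :=
    fun n => ne_top_of_le_ne_top hC₀fin (measure_mono (hCn n).1)
  -- the scalars
  set p : ℕ → ℝ := fun n => (μ (Bn n)).toReal with hpdef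
  set q : ℕ → ℝ := fun n => (μ (Cn n)).toReal with hqdef
  set r : ℕ → ℝ := fun n => ∫ x in Bn n, φ x ∂μ with hrdef
  set s : ℕ → ℝ := fun n => ∫ x in Cn n, φ x ∂μ with hsdef
  have hp : ∀ n, 0 < p n := fun n => ENNReal.toReal_pos (hBn n).2.2 (hBfin n)
  have hq : ∀ n, 0 < q n := fun n => ENNReal.toReal_pos (hCn n).2.2 (hCfin n)
  have hr : ∀ n, r n < α * p n := fun n =>
    setint_lt μ φ hφ α (Bn n) (hBm n) (hBn n).2.2 (hBfin n) (hBlt n)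
  have hs : ∀ n, α * q n < s n := fun n =>
    setint_gt μ φ hφ α (Cn n) (hCm n) (hCn n).2.2 (hCfin n) (hCgt n)
  set Dd : ℕ → ℝ := fun n => p n * s n - q n * r n with hDdef
  have hD : ∀ n, 0 < Dd n := by
    intro n
    have h1 : p n * (α * q n) < p n * s n := by
      exact (mul_lt_mul_iff_right₀ (hp n)).2 (hs n)
    have h2 : q n * r n < q n * (α * p n) := (mul_lt_mul_iff_right₀ (hq n)).2 (hr n)
    simp only [hDdef]
    nlinarith
  set A : ℕ → ℝ := fun n => (s n - α * q n) / Dd n with hAdef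
  set Bb : ℕ → ℝ := fun n => (α * p n - r n) / Dd n with hBbdef
  have hA : ∀ n, 0 < A n := fun n => div_pos (by linarith [hs n]) (hD n)
  have hBb : ∀ n, 0 < Bb n := fun n => div_pos (by linarith [hr n]) (hD n)
  have key1 : ∀ n, A n * p n + Bb n * q n = 1 := by
    intro n
    have := hD n
    simp only [hAdef, hBbdef]
    rw [div_mul_eq_mul_div, div_mul_eq_mul_div, ← add_div, div_eq_one_iff_eq this.ne']
    simp only [hDdef]
    ring
  have key2 : ∀ n, A n * r n + Bb n * s n = α := by
    intro n
    have := hD n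
    simp only [hAdef, hBbdef]
    rw [div_mul_eq_mul_div, div_mul_eq_mul_div, ← add_div, div_eq_iff this.ne']
    simp only [hDdef]
    ring
  set a : ℕ → ℝ := fun n => Real.sqrt (A n) with hadef
  set b : ℕ → ℝ := fun n => Real.sqrt (Bb n) with hbdef
  have ha2 : ∀ n, a n * a n = A n := fun n => Real.mul_self_sqrt (le_of_lt (hA n))
  have hb2 : ∀ n, b n * b n = Bb n := fun n => Real.mul_self_sqrt (le_of_lt (hBb n))
  -- the functions
  set hR : ℕ → X → ℝ := fun n x =>
    (Bn n).indicator (fun _ => a n) x + (Cn n).indicator (fun _ => b n) x with hRdef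
  have memR : ∀ n, MemLp (hR n) 2 μ := fun n =>
    ((memLp_indicator_const 2 (hBm n) (a n) (Or.inr (hBfin n))).add
      (memLp_indicator_const 2 (hCm n) (b n) (Or.inr (hCfin n))))
  have memC : ∀ n, MemLp (fun x => ((hR n x : ℝ) : ℂ)) 2 μ := fun n => (memR n).ofReal
  set u : ℕ → Lp ℂ 2 μ := fun n => (memC n).toLp _ with hudef
  have hu : ∀ n, (u n : X → ℂ) =ᵐ[μ] fun x => ((hR n x : ℝ) : ℂ) := fun n =>
    (memC n).coeFn_toLp
  -- pointwise identities
  have pt0 : ∀ m n, m ≠ n → ∀ x, hR m x * hR n x = 0 := by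
    intro m n hmn x
    by_cases hx : x ∈ Bn m ∪ Cn m
    · have h2 : hR n x = 0 := by
        have hxB : x ∉ Bn n := by
          intro hxn
          rcases hx with hx | hx
          · exact absurd hxn (Set.disjoint_left.1 (hBdisj hmn) hx)
          · exact hBCd n m x hxn hx
        have hxC : x ∉ Cn n := by
          intro hxn
          rcases hx with hx | hx
          · exact hBCd m n x hx hxn
          · exact absurd hxn (Set.disjoint_left.1 (hCdisj hmn) hx)
        simp only [hRdef, Set.indicator_of_notMem hxB, Set.indicator_of_notMem hxC, add_zero]
      rw [h2, mul_zero]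
    · have h1 : hR m x = 0 := by
        simp only [Set.mem_union, not_or] at hx
        simp only [hRdef, Set.indicator_of_notMem hx.1, Set.indicator_of_notMem hx.2, add_zero]
      rw [h1, zero_mul]
  have pt1 : ∀ n x, hR n x * hR n x =
      (Bn n).indicator (fun _ => A n) x + (Cn n).indicator (fun _ => Bb n) x := by
    intro n x
    by_cases hxB : x ∈ Bn n
    · have hxC : x ∉ Cn n := fun hc => hBCd n n x hxB hc
      simp only [hRdef, Set.indicator_of_mem hxB, Set.indicator_of_notMem hxC, add_zero,
        zero_add]
      exact ha2 n
    · by_cases hxC : x ∈ Cn n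
      · simp only [hRdef, Set.indicator_of_notMem hxB, Set.indicator_of_mem hxC, add_zero,
          zero_add]
        exact hb2 n
      · simp only [hRdef, Set.indicator_of_notMem hxB, Set.indicator_of_notMem hxC, add_zero,
          zero_add, mul_zero]
  have pt2 : ∀ n x, φ x * (hR n x * hR n x) =
      (Bn n).indicator (fun y => A n * φ y) x + (Cn n).indicator (fun y => Bb n * φ y) x := by
    intro n x
    by_cases hxB : x ∈ Bn n
    · have hxC : x ∉ Cn n := fun hc => hBCd n n x hxB hc
      simp only [hRdef, Set.indicator_of_mem hxB, Set.indicator_of_notMem hxC, add_zero,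
        zero_add]
      rw [ha2 n]
      ring
    · by_cases hxC : x ∈ Cn n
      · simp only [hRdef, Set.indicator_of_notMem hxB, Set.indicator_of_mem hxC, add_zero,
          zero_add]
        rw [hb2 n]
        ring
      · simp only [hRdef, Set.indicator_of_notMem hxB, Set.indicator_of_notMem hxC, add_zero,
          zero_add, mul_zero]
  -- integral identities
  have int1 : ∀ n, ∫ x, hR n x * hR n x ∂μ = 1 := by
    intro n
    have hiB : Integrable ((Bn n).indicator (fun _ => A n)) μ :=
      (integrable_indicator_iff (hBm n)).2
        (integrableOn_const (hBfin n))
    have hiC : Integrable ((Cn n).indicator (fun _ => Bb n)) μ :=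
      (integrable_indicator_iff (hCm n)).2
        (integrableOn_const (hCfin n))
    calc ∫ x, hR n x * hR n x ∂μ
        = ∫ x, ((Bn n).indicator (fun _ => A n) x + (Cn n).indicator (fun _ => Bb n) x) ∂μ := by
          exact integral_congr_ae (ae_of_all _ (pt1 n))
      _ = A n * p n + Bb n * q n := by
          rw [integral_add hiB hiC, integral_indicator_const _ (hBm n),
            integral_indicator_const _ (hCm n), smul_eq_mul, smul_eq_mul, measureReal_def,
            measureReal_def]
          ring
      _ = 1 := key1 n
  have int2 : ∀ n, ∫ x, φ x * (hR n x * hR n x) ∂μ = α := by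
    intro n
    have hiB : Integrable ((Bn n).indicator (fun y => A n * φ y)) μ :=
      (integrable_indicator_iff (hBm n)).2 ((int_on μ φ hφ (Bn n) (hBfin n)).const_mul _)
    have hiC : Integrable ((Cn n).indicator (fun y => Bb n * φ y)) μ :=
      (integrable_indicator_iff (hCm n)).2 ((int_on μ φ hφ (Cn n) (hCfin n)).const_mul _)
    calc ∫ x, φ x * (hR n x * hR n x) ∂μ
        = ∫ x, ((Bn n).indicator (fun y => A n * φ y) x
            + (Cn n).indicator (fun y => Bb n * φ y) x) ∂μ :=
          integral_congr_ae (ae_of_all _ (pt2 n))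
      _ = A n * r n + Bb n * s n := by
          rw [integral_add hiB hiC, integral_indicator (hBm n), integral_indicator (hCm n),
            integral_const_mul, integral_const_mul]
      _ = α := key2 n
  -- inner product identities
  have inner_uu : ∀ m n, (inner ℂ (u m) (u n) : ℂ) = if m = n then 1 else 0 := by
    intro m n
    rw [inner_ofReal μ (u m) (u n) (hR m) (hR n) (hu m) (hu n)]
    by_cases hmn : m = n
    · subst hmn
      rw [int1 m]
      simp
    · rw [if_neg hmn]
      have : ∫ x, hR m x * hR n x ∂μ = 0 := by
        rw [integral_congr_ae (ae_of_all _ (pt0 m n hmn))]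
        simp
      rw [this]
      simp
  have horth : Orthonormal ℂ u := orthonormal_iff_ite.2 inner_uu
  have inner_uTu : ∀ m n, (inner ℂ (u m) (T (u n)) : ℂ) = if m = n then (α : ℂ) else 0 := by
    intro m n
    have hTu : (T (u n) : X → ℂ) =ᵐ[μ] fun x => ((φ x * hR n x : ℝ) : ℂ) := by
      filter_upwards [hT (u n), hu n] with x hx1 hx2
      rw [hx1, hx2]
      push_cast
      ring
    rw [inner_ofReal μ (u m) (T (u n)) (hR m) (fun x => φ x * hR n x) (hu m) hTu]
    by_cases hmn : m = n
    · subst hmn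
      have : ∫ x, hR m x * (φ x * hR m x) ∂μ = α := by
        rw [show (fun x => hR m x * (φ x * hR m x)) = fun x => φ x * (hR m x * hR m x) by
          funext x; ring]
        exact int2 m
      rw [this]
      simp
    · rw [if_neg hmn]
      have : ∫ x, hR m x * (φ x * hR n x) ∂μ = 0 := by
        rw [show (fun x => hR m x * (φ x * hR n x)) = fun x => φ x * (hR m x * hR n x) by
          funext x; ring]
        rw [integral_congr_ae (ae_of_all _ (fun x => by rw [pt0 m n hmn x, mul_zero]))]
        simp
      rw [this]
      simp
  -- the subspace and projection
  set K : Submodule ℂ (Lp ℂ 2 μ) :=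
    (Submodule.span ℂ (Set.range u)).topologicalClosure with hKdef
  haveI : CompleteSpace K :=
    (Submodule.isClosed_topologicalClosure _).completeSpace_coe
  set P : Lp ℂ 2 μ →L[ℂ] Lp ℂ 2 μ := K.subtypeL ∘L K.orthogonalProjectionOnto with hPdef
  have hmemK : ∀ n, u n ∈ K := fun n =>
    Submodule.le_topologicalClosure _ (Submodule.subset_span ⟨n, rfl⟩)
  have hPapp : ∀ f, P f = (K.orthogonalProjectionOnto f : Lp ℂ 2 μ) := fun f => rfl
  have hPK : ∀ f, P f ∈ K := fun f => (K.orthogonalProjectionOnto f).2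
  have hPid : ∀ v ∈ K, P v = v := fun v hv => (Submodule.starProjection_eq_self_iff (K := K)).2 hv
  have hidem : IsIdempotentElem P := by
    apply ContinuousLinearMap.ext
    intro f
    rw [ContinuousLinearMap.mul_apply]
    exact hPid (P f) (hPK f)
  -- projection of T (u n)
  have hproj : ∀ n, P (T (u n)) = (α : ℂ) • u n := by
    intro n
    show K.starProjection (T (u n)) = _
    apply Submodule.eq_starProjection_of_mem_of_inner_eq_zero
      (Submodule.smul_mem _ _ (hmemK n))
    intro w hw
    have hker : K ≤ LinearMap.ker (innerSL ℂ (T (u n) - (α : ℂ) • u n) : Lp ℂ 2 μ →ₗ[ℂ] ℂ) := by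
      apply Submodule.topologicalClosure_minimal
      · rw [Submodule.span_le]
        rintro - ⟨m, rfl⟩
        simp only [SetLike.mem_coe, LinearMap.mem_ker, ContinuousLinearMap.coe_coe]
        rw [innerSL_apply_apply, inner_sub_left, inner_smul_left]
        have h1 : (inner ℂ (T (u n)) (u m) : ℂ) = starRingEnd ℂ (inner ℂ (u m) (T (u n))) :=
          (inner_conj_symm _ _).symm
        have h2 : (inner ℂ ((u n) : Lp ℂ 2 μ) (u m) : ℂ) = starRingEnd ℂ (inner ℂ (u m) (u n)) :=
          (inner_conj_symm _ _).symm
        rw [h1, h2, inner_uTu m n, inner_uu m n]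
        by_cases hmn : m = n <;> simp [hmn, Complex.conj_ofReal]
      · exact ContinuousLinearMap.isClosed_ker _
    have hmem := hker hw
    rw [LinearMap.mem_ker] at hmem
    have : innerSL ℂ (T (u n) - (α : ℂ) • u n) w = 0 := hmem
    rwa [innerSL_apply_apply] at this
  -- finish
  have hPu : ∀ n, P (u n) = u n := fun n => hPid _ (hmemK n)
  set Φ : Lp ℂ 2 μ →L[ℂ] Lp ℂ 2 μ := (P ∘L T) - (α : ℂ) • P with hΦdef
  have hΦu : ∀ m, u m ∈ LinearMap.ker (Φ : Lp ℂ 2 μ →ₗ[ℂ] Lp ℂ 2 μ) := by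
    intro m
    rw [LinearMap.mem_ker]
    show (P ∘L T) (u m) - ((α : ℂ) • P) (u m) = 0
    rw [ContinuousLinearMap.comp_apply, ContinuousLinearMap.smul_apply, hproj m, hPu m, sub_self]
  have hKker : K ≤ LinearMap.ker (Φ : Lp ℂ 2 μ →ₗ[ℂ] Lp ℂ 2 μ) := by
    apply Submodule.topologicalClosure_minimal
    · rw [Submodule.span_le]
      rintro - ⟨m, rfl⟩
      exact hΦu m
    · exact ContinuousLinearMap.isClosed_ker _
  have hsadj : IsSelfAdjoint P := isSelfAdjoint_starProjection K
  have hrange : ∀ n, u n ∈ LinearMap.range (P : Lp ℂ 2 μ →ₗ[ℂ] Lp ℂ 2 μ) := fun n => ⟨u n, hPu n⟩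
  refine ⟨P, α, hidem, hsadj, ?_, hα, ?_⟩
  · intro hfd
    have hv : LinearIndependent ℂ
        (fun n => (⟨u n, hrange n⟩ : LinearMap.range (P : Lp ℂ 2 μ →ₗ[ℂ] Lp ℂ 2 μ))) := by
      apply LinearIndependent.of_comp (LinearMap.range (P : Lp ℂ 2 μ →ₗ[ℂ] Lp ℂ 2 μ)).subtype
      exact horth.linearIndependent
    exact Module.Finite.not_linearIndependent_of_infinite _ hv
  · apply ContinuousLinearMap.ext
    intro f
    have h1 : Φ (P f) = 0 := hKker (hPK f)
    have h2 : (P ∘L T) (P f) - ((α : ℂ) • P) (P f) = 0 := h1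
    rw [ContinuousLinearMap.comp_apply, ContinuousLinearMap.smul_apply] at h2
    have h3 : P (P f) = P f := hPid (P f) (hPK f)
    rw [h3, sub_eq_zero] at h2
    show P (T (P f)) = ((α : ℂ) • P) f
    rw [ContinuousLinearMap.smul_apply]
    exact h2
end

section
/- Let E be a bounded positive operator on a Hilbert space H, let P be an orthogonal projection with finite dimensional kernel, and suppose P E P = α P for some α ≥ 0. Let V = ran P ∩ ker(E − α·I) and let W be the orthogonal complement of V inside ran P. Then dim W ≤ dim ker P. -/
/-- If `P E P = α P` with `ker P` finite dimensional, then the orthogonal complement,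
inside `ran P`, of `V = ran P ∩ ker (E - α)` has dimension at most `dim ker P`. -/
theorem dim_W_le_dim_ker
    {H : Type*} [NormedAddCommGroup H] [InnerProductSpace ℂ H] [CompleteSpace H]
    (E : H →L[ℂ] H) (hpos : E.IsPositive)
    (P : H →L[ℂ] H) (hP : IsIdempotentElem P) (hPsa : IsSelfAdjoint P)
    (hker : FiniteDimensional ℂ (LinearMap.ker (P : H →ₗ[ℂ] H)))
    (α : ℝ) (hα : 0 ≤ α) (hPEP : P ∘L E ∘L P = (α : ℂ) • P)
    (V W : Submodule ℂ H)
    (hV : V = LinearMap.range (P : H →ₗ[ℂ] H) ⊓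
      LinearMap.ker ((E - (α : ℂ) • (1 : H →L[ℂ] H) : H →L[ℂ] H) : H →ₗ[ℂ] H))
    (hW : W = LinearMap.range (P : H →ₗ[ℂ] H) ⊓ Vᗮ) :
    Module.rank ℂ W ≤ Module.rank ℂ (LinearMap.ker (P : H →ₗ[ℂ] H)) := by
  have hPfix : ∀ x : H, x ∈ LinearMap.range (P : H →ₗ[ℂ] H) → P x = x := by
    rintro _ ⟨y, rfl⟩
    have := congrArg (fun T : H →L[ℂ] H => T y) hP
    simpa using this
  have hmemker : ∀ x : H, E x - P (E x) ∈ LinearMap.ker (P : H →ₗ[ℂ] H) := by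
    intro x
    have := congrArg (fun T : H →L[ℂ] H => T (E x)) hP
    simp only [ContinuousLinearMap.mul_apply] at this
    simp [LinearMap.mem_ker, map_sub, this]
  let f : W →ₗ[ℂ] (LinearMap.ker (P : H →ₗ[ℂ] H)) :=
  { toFun := fun x => ⟨E (x : H) - P (E (x : H)), hmemker _⟩
    map_add' := by intro a b; ext; simp [map_add]; abel
    map_smul' := by intro c a; ext; simp [map_smul, smul_sub] }
  have hinj : Function.Injective f := by
    rw [injective_iff_map_eq_zero]
    intro x hx
    have hsub : E (x : H) - P (E (x : H)) = 0 := congrArg Subtype.val hx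
    obtain ⟨hxr, hxperp⟩ : (x : H) ∈ LinearMap.range (P : H →ₗ[ℂ] H) ⊓ Vᗮ := hW ▸ x.2
    have hPx : P (x : H) = x := hPfix _ hxr
    have h1 : P (E (P (x : H))) = (α : ℂ) • P (x : H) := by
      have := congrArg (fun T : H →L[ℂ] H => T (x : H)) hPEP
      simpa using this
    rw [hPx] at h1
    have hEx : E (x : H) = (α : ℂ) • (x : H) := by
      have h2 := sub_eq_zero.mp hsub
      rw [h2, h1]
    have hxV : (x : H) ∈ V := by
      rw [hV]
      refine ⟨hxr, ?_⟩
      simp [LinearMap.mem_ker, hEx]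
    have hx0 : (x : H) = 0 :=
      (Submodule.disjoint_def.mp V.orthogonal_disjoint) _ hxV hxperp
    exact Subtype.ext hx0
  exact LinearMap.rank_le_of_injective f hinj
end

section
/- Let E : L²[0,1) → L²[0,1) be the multiplication operator (Ef)(x) = x·f(x). For i ∈ ℕ let X_i = [2^{-i-1}, 2^{-i}) ∪ [1 − 2^{-i}, 1 − 2^{-i-1}) and f_i = 2^{i/2} χ_{X_i}. Then {f_i} is an orthonormal sequence, and if P is the orthogonal projection onto the closed span of {f_i}, then P E P = (1/2) P. -/
open MeasureTheory intervalIntegral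

private lemma mulX_intOn (p q : ℝ) : IntegrableOn (fun x : ℝ => (x:ℂ)) (Set.Ico p q) volume :=
  (Complex.continuous_ofReal.integrableOn_Icc).mono_set Set.Ico_subset_Icc_self

private lemma mulX_Ico_int (p q : ℝ) (h : p ≤ q) :
    ∫ x in Set.Ico p q, (x:ℂ) = (((q^2 - p^2)/2 : ℝ) : ℂ) := by
  have h1 : ∫ x in Set.Ico p q, ((x:ℝ):ℂ) = ((∫ x in Set.Ico p q, x : ℝ) : ℂ) := integral_ofReal
  rw [h1]
  congr 1
  rw [MeasureTheory.restrict_Ico_eq_restrict_Ioc, ← integral_of_le h, integral_id]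

/-- The multiplication operator by `x` on `L²[0,1)` compressed by the projection onto the
closed span of the normalized indicators of `Xᵢ = [2^{-i-1}, 2^{-i}) ∪ [1-2^{-i}, 1-2^{-i-1})`
equals `(1/2)` times the projection. -/
theorem multiplication_by_x_compression
    (μ : Measure ℝ) (hμ : μ = volume.restrict (Set.Ico (0 : ℝ) 1))
    (E : Lp ℂ 2 μ →L[ℂ] Lp ℂ 2 μ)
    (hE : ∀ f : Lp ℂ 2 μ, (E f : ℝ → ℂ) =ᵐ[μ] fun x => (x : ℂ) * f x)
    (X : ℕ → Set ℝ)
    (hX : ∀ i, X i = Set.Ico ((2 : ℝ) ^ (-(i : ℤ) - 2)) ((2 : ℝ) ^ (-(i : ℤ) - 1)) ∪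
        Set.Ico (1 - (2 : ℝ) ^ (-(i : ℤ) - 1)) (1 - (2 : ℝ) ^ (-(i : ℤ) - 2)))
    (f : ℕ → Lp ℂ 2 μ)
    (hf : ∀ i, (f i : ℝ → ℂ) =ᵐ[μ]
        (X i).indicator fun _ => ((Real.sqrt (2 ^ (i + 1)) : ℝ) : ℂ))
    (P : Lp ℂ 2 μ →L[ℂ] Lp ℂ 2 μ) (hP : IsIdempotentElem P) (hPsa : IsSelfAdjoint P)
    (hrange : LinearMap.range (P : Lp ℂ 2 μ →ₗ[ℂ] Lp ℂ 2 μ) = (Submodule.span ℂ (Set.range f)).topologicalClosure) :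
    Orthonormal ℂ f ∧ P ∘L E ∘L P = (2 : ℂ)⁻¹ • P := by
  have h2ne : (2:ℝ) ≠ 0 := by norm_num
  set A : ℕ → ℝ := fun i => (2:ℝ)^(-(i:ℤ)-2) with hAdef
  set B : ℕ → ℝ := fun i => (2:ℝ)^(-(i:ℤ)-1) with hBdef
  set c : ℕ → ℝ := fun i => Real.sqrt (2^(i+1)) with hcdef
  have hX' : ∀ i, X i = Set.Ico (A i) (B i) ∪ Set.Ico (1 - B i) (1 - A i) := by
    intro i; rw [hX i]
  have hf' : ∀ i, (f i : ℝ → ℂ) =ᵐ[μ] (X i).indicator fun _ => ((c i : ℝ) : ℂ) := hf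
  have hA0 : ∀ i, (0:ℝ) < A i := fun i => by positivity
  have hAB : ∀ i, A i < B i := fun i => zpow_lt_zpow_right₀ one_lt_two (by omega)
  have hB2 : ∀ i, B i ≤ 1/2 := by
    intro i
    have h : (B i : ℝ) ≤ (2:ℝ)^(-1:ℤ) := zpow_le_zpow_right₀ one_le_two (by omega)
    simpa using h
  have hBA : ∀ i, B i = 2 * A i := by
    intro i
    have h : (2:ℝ)^(-(i:ℤ)-1) = (2:ℝ)^(1 + (-(i:ℤ)-2)) := by congr 1; ring
    simp only [hBdef, hAdef]
    rw [h, zpow_add₀ h2ne, zpow_one]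
  have mX : ∀ i, MeasurableSet (X i) := by
    intro i; rw [hX' i]; exact measurableSet_Ico.union measurableSet_Ico
  have hXsub : ∀ i, X i ⊆ Set.Ico (0:ℝ) 1 := by
    intro i x hx
    rw [hX' i] at hx
    have h1 := hA0 i; have h2 := hAB i; have h3 := hB2 i
    rcases hx with ⟨hx1, hx2⟩ | ⟨hx1, hx2⟩ <;> exact ⟨by linarith, by linarith⟩
  have hdisj : ∀ i j, i < j → X i ∩ X j = ∅ := by
    intro i j hij
    have hBjAi : B j ≤ A i := zpow_le_zpow_right₀ one_le_two (by omega)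
    have h1 := hA0 i; have h2 := hAB i; have h3 := hB2 i
    have h4 := hA0 j; have h5 := hAB j; have h6 := hB2 j
    rw [hX' i, hX' j]
    ext x
    simp only [Set.mem_inter_iff, Set.mem_union, Set.mem_Ico, Set.mem_empty_iff_false, iff_false]
    rintro ⟨⟨h7, h8⟩ | ⟨h7, h8⟩, ⟨h9, h10⟩ | ⟨h9, h10⟩⟩ <;> linarith
  have hdisj' : ∀ i j, i ≠ j → X i ∩ X j = ∅ := by
    intro i j hij
    rcases hij.lt_or_gt with h | h
    · exact hdisj i j h
    · rw [Set.inter_comm]; exact hdisj j i h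
  have hsplit : ∀ i, Disjoint (Set.Ico (A i) (B i)) (Set.Ico (1 - B i) (1 - A i)) := by
    intro i
    rw [Set.disjoint_left]
    rintro x ⟨hx1, hx2⟩ ⟨hx3, hx4⟩
    have h3 := hB2 i
    linarith
  have hXvol : ∀ i, (μ (X i)).toReal = 2 * A i := by
    intro i
    have h2 := hAB i
    rw [hμ, Measure.restrict_apply (mX i), Set.inter_eq_left.2 (hXsub i), hX' i,
      measure_union (hsplit i) measurableSet_Ico, Real.volume_Ico, Real.volume_Ico,
      ← ENNReal.ofReal_add (by linarith) (by linarith),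
      ENNReal.toReal_ofReal (by linarith)]
    have h3 := hBA i
    linarith
  have hc2 : ∀ i, c i * c i = 2^(i+1) := fun i => Real.mul_self_sqrt (by positivity)
  have hhalf : ∀ i, (2:ℝ)^(i+1) * A i = 1/2 := by
    intro i
    have h : ((2:ℝ)^(i+1)) * (2:ℝ)^(-(i:ℤ)-2) = (2:ℝ)^(-1:ℤ) := by
      rw [show ((2:ℝ)^(i+1) : ℝ) = (2:ℝ)^(((i:ℕ):ℤ)+1) by rw [← zpow_natCast]; push_cast; ring_nf,
        ← zpow_add₀ h2ne, show ((i:ℤ))+1+(-(i:ℤ)-2) = -1 by ring]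
    simpa using h
  -- inner products of the f's
  have hFae : ∀ i j, (fun x => (inner ℂ ((f i : ℝ → ℂ) x) ((f j : ℝ → ℂ) x) : ℂ)) =ᵐ[μ]
      fun x => (X i ∩ X j).indicator (fun _ => ((c i * c j : ℝ) : ℂ)) x := by
    intro i j
    filter_upwards [hf' i, hf' j] with x h1 h2
    rw [RCLike.inner_apply, h1, h2]
    by_cases hi : x ∈ X i <;> by_cases hj : x ∈ X j <;>
      simp [Set.indicator_apply, hi, hj, Complex.conj_ofReal, Complex.ofReal_mul, mul_comm]
  have hinner : ∀ i j, (inner ℂ (f i) (f j) : ℂ) = if i = j then 1 else 0 := by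
    intro i j
    rw [L2.inner_def, integral_congr_ae (hFae i j),
      integral_indicator_const _ ((mX i).inter (mX j))]
    by_cases h : i = j
    · subst h
      rw [Set.inter_self, if_pos rfl, measureReal_def, hXvol i, Complex.real_smul, ← Complex.ofReal_mul]
      norm_cast
      rw [hc2 i]
      have := hhalf i
      linarith
    · rw [hdisj' i j h, measureReal_empty, if_neg h]
      simp
  -- inner products against E
  have hGae : ∀ i j, (fun x => (inner ℂ ((f j : ℝ → ℂ) x) ((E (f i) : ℝ → ℂ) x) : ℂ)) =ᵐ[μ]
      fun x => (X j ∩ X i).indicator (fun y => ((c j * c i : ℝ):ℂ) * (y:ℂ)) x := by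
    intro i j
    filter_upwards [hf' i, hf' j, hE (f i)] with x h1 h2 h3
    rw [RCLike.inner_apply, h2, h3, h1]
    by_cases hj : x ∈ X j <;> by_cases hi : x ∈ X i <;>
      simp [Set.indicator_apply, hi, hj, Complex.conj_ofReal, Complex.ofReal_mul]
    ring
  have hEinner : ∀ i j, (inner ℂ (f j) (E (f i)) : ℂ) = if i = j then (2:ℂ)⁻¹ else 0 := by
    intro i j
    rw [L2.inner_def, integral_congr_ae (hGae i j), MeasureTheory.integral_indicator ((mX j).inter (mX i))]
    by_cases h : i = j
    · subst h
      rw [Set.inter_self, if_pos rfl, MeasureTheory.integral_const_mul, hμ,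
        Measure.restrict_restrict (mX i), Set.inter_eq_left.2 (hXsub i), hX' i,
        setIntegral_union (hsplit i) measurableSet_Ico (mulX_intOn _ _) (mulX_intOn _ _),
        mulX_Ico_int _ _ (hAB i).le, mulX_Ico_int _ _ (by linarith [hAB i]),
        ← Complex.ofReal_add, ← Complex.ofReal_mul]
      have harea : (B i^2 - A i^2)/2 + ((1-A i)^2 - (1-B i)^2)/2 = A i := by
        rw [hBA i]; ring
      rw [harea, hc2 i]
      rw [show (2:ℂ)⁻¹ = (((1:ℝ)/2 : ℝ) : ℂ) by norm_num]
      exact_mod_cast congrArg (Complex.ofReal) (hhalf i)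
    · rw [hdisj' j i (Ne.symm h), setIntegral_empty, if_neg h]
  have horm : Orthonormal ℂ f := orthonormal_iff_ite.2 hinner
  refine ⟨horm, ?_⟩
  have hPf : ∀ j, P (f j) = f j := by
    intro j
    have hjmem : f j ∈ LinearMap.range (P : Lp ℂ 2 μ →ₗ[ℂ] Lp ℂ 2 μ) := by
      rw [hrange]
      exact Submodule.le_topologicalClosure _ (Submodule.subset_span ⟨j, rfl⟩)
    obtain ⟨w, hw⟩ := hjmem
    calc P (f j) = P (P w) := by exact (congrArg P hw).symm
    _ = (P * P) w := rfl
    _ = P w := by rw [hP]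
    _ = f j := hw
  have hPE : ∀ j h, h ∈ LinearMap.range (P : Lp ℂ 2 μ →ₗ[ℂ] Lp ℂ 2 μ) →
      (inner ℂ (f j) (E h) : ℂ) = (2:ℂ)⁻¹ * inner ℂ (f j) h := by
    intro j h hh
    set φ : Lp ℂ 2 μ →L[ℂ] ℂ := (innerSL ℂ (f j)).comp E - (2:ℂ)⁻¹ • innerSL ℂ (f j) with hφ
    have hk : Submodule.span ℂ (Set.range f) ≤ LinearMap.ker (φ : Lp ℂ 2 μ →ₗ[ℂ] ℂ) := by
      rw [Submodule.span_le]
      rintro _ ⟨i, rfl⟩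
      simp only [SetLike.mem_coe, LinearMap.mem_ker, ContinuousLinearMap.coe_coe, hφ, ContinuousLinearMap.sub_apply,
        ContinuousLinearMap.comp_apply, ContinuousLinearMap.smul_apply, innerSL_apply_apply,
        smul_eq_mul, ContinuousLinearMap.coe_sub', Pi.sub_apply, ContinuousLinearMap.coe_smul',
        Pi.smul_apply]
      rw [hEinner i j, hinner j i]
      by_cases hij : i = j
      · subst hij; simp
      · rw [if_neg hij, if_neg (Ne.symm hij)]; simp
    have h2 : (Submodule.span ℂ (Set.range f)).topologicalClosure ≤ LinearMap.ker (φ : Lp ℂ 2 μ →ₗ[ℂ] ℂ) :=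
      Submodule.topologicalClosure_minimal _ hk (ContinuousLinearMap.isClosed_ker φ)
    have h3 : φ h = 0 := h2 (by rw [← hrange]; exact hh)
    have h4 : (inner ℂ (f j) (E h) : ℂ) - (2:ℂ)⁻¹ * inner ℂ (f j) h = 0 := by
      simpa [hφ, ContinuousLinearMap.sub_apply, ContinuousLinearMap.comp_apply,
        ContinuousLinearMap.smul_apply, innerSL_apply_apply, smul_eq_mul] using h3
    exact sub_eq_zero.1 h4
  refine ContinuousLinearMap.ext fun g => ?_
  simp only [ContinuousLinearMap.comp_apply, ContinuousLinearMap.smul_apply]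
  set u : Lp ℂ 2 μ := P (E (P g)) with hu
  set v : Lp ℂ 2 μ := (2:ℂ)⁻¹ • P g with hv
  have hum : u ∈ LinearMap.range (P : Lp ℂ 2 μ →ₗ[ℂ] Lp ℂ 2 μ) := ⟨E (P g), rfl⟩
  have hvm : v ∈ LinearMap.range (P : Lp ℂ 2 μ →ₗ[ℂ] Lp ℂ 2 μ) := Submodule.smul_mem _ _ ⟨g, rfl⟩
  have hPgm : P g ∈ LinearMap.range (P : Lp ℂ 2 μ →ₗ[ℂ] Lp ℂ 2 μ) := ⟨g, rfl⟩
  have hfi : ∀ i, (inner ℂ (f i) (u - v) : ℂ) = 0 := by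
    intro i
    have h1 : (inner ℂ (f i) u : ℂ) = inner ℂ (f i) (E (P g)) := by
      have h := ContinuousLinearMap.adjoint_inner_left P (E (P g)) (f i)
      rw [hPsa.adjoint_eq, hPf i] at h
      exact h.symm
    rw [inner_sub_right, h1, hPE i (P g) hPgm, hv, inner_smul_right]
    ring
  have huv : u - v ∈ (Submodule.span ℂ (Set.range f))ᗮ := by
    rw [Submodule.mem_orthogonal]
    intro w hw
    induction hw using Submodule.span_induction with
    | mem x hx => obtain ⟨i, rfl⟩ := hx; exact hfi i
    | zero => simp
    | add x y _ _ hx hy => rw [inner_add_left, hx, hy, add_zero]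
    | smul a x _ hx => rw [inner_smul_left, hx, mul_zero]
  have hcl : u - v ∈ ((Submodule.span ℂ (Set.range f))ᗮ)ᗮ := by
    have hle : (Submodule.span ℂ (Set.range f)).topologicalClosure ≤
        ((Submodule.span ℂ (Set.range f))ᗮ)ᗮ :=
      Submodule.topologicalClosure_minimal _ (Submodule.le_orthogonal_orthogonal _)
        (Submodule.isClosed_orthogonal _)
    have hmem : u - v ∈ LinearMap.range (P : Lp ℂ 2 μ →ₗ[ℂ] Lp ℂ 2 μ) := Submodule.sub_mem _ hum hvm
    exact hle (by rw [← hrange]; exact hmem)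
  have hz : (inner ℂ (u - v) (u - v) : ℂ) = 0 :=
    (Submodule.mem_orthogonal _ _).1 hcl (u - v) huv
  exact sub_eq_zero.1 (inner_self_eq_zero.1 hz)
end
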